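/- arXiv:2008.03494 — 11 statements merged into one kernel-verified Lean document; each statement's English description precedes it below -/
import Mathlib

section
/- Let G be a totally ordered abelian group (written multiplicatively with identity e) and H a convex subgroup of G. If g, h ∈ G satisfy g·h⁻¹ ∈ G² (i.e. g and h have the same class mod squares) and g·h⁻¹ ∈ H, then g·h⁻¹ ∈ H², i.e. g and h have the same class modulo H². -/
theorem stmt0 {G : Type*} [CommGroup G] [LinearOrder G] [IsOrderedMonoid G] (H : Subgroup G)
    (hconv : ∀ ⦃g h : G⦄, h ∈ H → 1 ≤ g → g ≤ h → g ∈ H)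
    (g h : G) (hsq : ∃ u : G, g * h⁻¹ = u ^ 2) (hH : g * h⁻¹ ∈ H) :
    ∃ u ∈ H, g * h⁻¹ = u ^ 2 := by
  obtain ⟨u, hu⟩ := hsq
  refine ⟨u, ?_, hu⟩
  rw [hu] at hH
  rcases le_total 1 u with h1 | h1
  · exact hconv hH h1 (by calc u = u * 1 := (mul_one u).symm
      _ ≤ u * u := by exact mul_le_mul_right h1 u
      _ = u ^ 2 := (sq u).symm)
  · have h2 : (1:G) ≤ u⁻¹ := by simpa using inv_le_inv' h1
    have h3 : u⁻¹ ≤ (u ^ 2)⁻¹ := by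
      rw [← inv_pow, sq]
      calc u⁻¹ = u⁻¹ * 1 := (mul_one _).symm
        _ ≤ u⁻¹ * u⁻¹ := mul_le_mul_right h2 _
    have := hconv (H.inv_mem hH) h2 h3
    simpa using H.inv_mem this
end

section
/- Let G be a totally ordered abelian group with identity e and H a convex subgroup. Let g₁, g₂, h ∈ G with g₁·g₂⁻¹ ∈ H², h·g₁⁻¹ ∈ G², and h·g₁⁻¹ ∉ H². If h > g₁ then h > g₂, and if h < g₁ then h < g₂. -/
private lemma sq_pos_aux {G : Type*} [CommGroup G] [LinearOrder G] [IsOrderedMonoid G] {v : G}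
    (hv : 1 < v ^ 2) : ∃ w : G, w ^ 2 = v ^ 2 ∧ 1 < w := by
  rcases le_or_gt v 1 with hle | hlt
  · exact absurd hv (not_lt.mpr (by
      calc v ^ 2 = v * v := sq v
      _ ≤ 1 * 1 := mul_le_mul' hle hle
      _ = 1 := one_mul 1))
  · exact ⟨v, rfl, hlt⟩

theorem stmt1 {G : Type*} [CommGroup G] [LinearOrder G] [IsOrderedMonoid G] (H : Subgroup G)
    (hconv : ∀ ⦃g h : G⦄, h ∈ H → 1 ≤ g → g ≤ h → g ∈ H)
    (g₁ g₂ h : G)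
    (h12 : ∃ u ∈ H, g₁ * g₂⁻¹ = u ^ 2)
    (hG2 : ∃ u : G, h * g₁⁻¹ = u ^ 2)
    (hnH2 : ¬ ∃ u ∈ H, h * g₁⁻¹ = u ^ 2) :
    (g₁ < h → g₂ < h) ∧ (h < g₁ → h < g₂) := by
  obtain ⟨u, huH, hu⟩ := h12
  obtain ⟨v, hv⟩ := hG2
  constructor
  · intro hlt
    have h1 : 1 < v ^ 2 := by rw [← hv, ← div_eq_mul_inv]; exact one_lt_div'.mpr hlt
    obtain ⟨w, hw2, hw1⟩ := sq_pos_aux h1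
    have hw2' : h * g₁⁻¹ = w ^ 2 := by rw [hv, ← hw2]
    have hwH : w ∉ H := fun hw => hnH2 ⟨w, hw, hw2'⟩
    have hgt : u⁻¹ < w := by
      by_contra hle
      exact hwH (hconv (H.inv_mem huH) hw1.le (not_lt.mp hle))
    have key : h * g₂⁻¹ = (w * u) ^ 2 := by
      have : h * g₂⁻¹ = (h * g₁⁻¹) * (g₁ * g₂⁻¹) := by group
      rw [this, hw2', hu, mul_pow]
    have h2 : 1 < h * g₂⁻¹ := by
      rw [key]
      have hwu : 1 < w * u := by
        have := mul_lt_mul_of_lt_of_le hgt (le_refl u)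
        simpa using this
      exact one_lt_pow' hwu (by norm_num)
    rw [← div_eq_mul_inv, one_lt_div'] at h2
    exact h2
  · intro hlt
    have h1 : 1 < (v⁻¹) ^ 2 := by
      rw [inv_pow, ← hv, mul_inv_rev, inv_inv, ← div_eq_mul_inv]
      exact one_lt_div'.mpr hlt
    obtain ⟨w, hw2, hw1⟩ := sq_pos_aux h1
    have hw2' : g₁ * h⁻¹ = w ^ 2 := by
      rw [hw2, inv_pow, ← hv, mul_inv_rev, inv_inv]
    have hwH : w ∉ H := fun hw => hnH2 ⟨w⁻¹, H.inv_mem hw, by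
      rw [inv_pow, ← hw2', mul_inv_rev, inv_inv]⟩
    have hgt : u < w := by
      by_contra hle
      exact hwH (hconv huH hw1.le (not_lt.mp hle))
    have key : g₂ * h⁻¹ = (w * u⁻¹) ^ 2 := by
      have : g₂ * h⁻¹ = (g₁ * h⁻¹) * (g₁ * g₂⁻¹)⁻¹ := by
        rw [mul_inv_rev, inv_inv]
        rw [show g₁ * h⁻¹ * (g₂ * g₁⁻¹) = g₂ * h⁻¹ * (g₁ * g₁⁻¹) from by
          simp only [mul_comm, mul_assoc, mul_left_comm], mul_inv_cancel, mul_one]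
      rw [this, hw2', hu, mul_pow, inv_pow]
    have h2 : 1 < g₂ * h⁻¹ := by
      rw [key]
      have hwu : 1 < w * u⁻¹ := by
        rw [← div_eq_mul_inv]
        exact one_lt_div'.mpr hgt
      exact one_lt_pow' hwu (by norm_num)
    rw [← div_eq_mul_inv, one_lt_div'] at h2
    exact h2
end

section
/- Let (K, val) be a valued field whose residue field F has characteristic ≠ 2 and in which every strict unit admits a square root. If an : Kˣ → Fˣ is a group homomorphism whose restriction to the units Bˣ of the valuation ring equals the residue map π, then: (i) for every g ∈ G and nonzero c ∈ F there is w ∈ Kˣ with val(w) = g and an(w) = c; (ii) for nonzero x₁, x₂ with x₁ + x₂ ≠ 0, if val(x₁) < val(x₂) then an(x₁+x₂) = an(x₁), and if val(x₁) = val(x₂) and an(x₁) + an(x₂) ≠ 0 then val(x₁+x₂) = val(x₁) and an(x₁+x₂) = an(x₁) + an(x₂); (iii) for x, y ∈ Kˣ with val(x)·val(y)⁻¹ ∈ G² and an(x) = an(y), there exists u ∈ Kˣ with y = u²x. -/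
/-- A (multiplicatively written) valuation on a field `K` with value group `G`:
`v` is multiplicative and satisfies the ultrametric inequality on nonzero elements,
and is surjective onto `G`.  The value at `0` is irrelevant (the paper's `∞`). -/
structure MulValuation (K : Type*) [Field K] (G : Type*) [CommGroup G] [LinearOrder G] [IsOrderedMonoid G] where
  v : K → G
  map_mul : ∀ ⦃x y : K⦄, x ≠ 0 → y ≠ 0 → v (x * y) = v x * v y
  min_le_map_add : ∀ ⦃x y : K⦄, x ≠ 0 → y ≠ 0 → x + y ≠ 0 → min (v x) (v y) ≤ v (x + y)
  surj : ∀ g : G, ∃ x : K, x ≠ 0 ∧ v x = g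

namespace MulValuation

variable {K : Type*} [Field K] {G : Type*} [CommGroup G] [LinearOrder G] [IsOrderedMonoid G]

/-- The valuation ring `B = {x : val x ≥ e} ∪ {0}`, as a set. -/
def ringSet (V : MulValuation K G) : Set K := {x : K | x = 0 ∨ 1 ≤ V.v x}

/-- `val(Aˣ)`: the set of values of units of a subring `A` of `K`. -/
def unitVals (V : MulValuation K G) (A : Subring K) : Set G :=
  {g : G | ∃ x : K, x ≠ 0 ∧ x ∈ A ∧ x⁻¹ ∈ A ∧ V.v x = g}

end MulValuation

/-- `π : K → F` is a residue homomorphism for `V`: it is a surjective ring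
homomorphism on the valuation ring, whose nonvanishing locus on the valuation ring
is exactly the set of units of the valuation ring. -/
def MulValuation.IsResidue {K : Type*} [Field K] {G : Type*} [CommGroup G] [LinearOrder G] [IsOrderedMonoid G]
    {F : Type*} [Field F] (V : MulValuation K G) (π : K → F) : Prop :=
  π 0 = 0 ∧ π 1 = 1 ∧
  (∀ x y : K, x ∈ V.ringSet → y ∈ V.ringSet → π (x + y) = π x + π y) ∧
  (∀ x y : K, x ∈ V.ringSet → y ∈ V.ringSet → π (x * y) = π x * π y) ∧
  (∀ x : K, x ≠ 0 → x ∈ V.ringSet → (π x ≠ 0 ↔ V.v x = 1)) ∧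
  (∀ c : F, ∃ x ∈ V.ringSet, π x = c)

theorem stmt8 {K : Type*} [Field K] {G : Type*} [CommGroup G] [LinearOrder G] [IsOrderedMonoid G]
    {F : Type*} [Field F] (V : MulValuation K G) (π : K → F)
    (hres : V.IsResidue π) (hchar : (2 : F) ≠ 0)
    (hsqrt : ∀ x : K, x ≠ 0 → V.v x = 1 → π x = 1 → ∃ y : K, x = y ^ 2)
    (an : K → F)
    (han0 : ∀ x : K, x ≠ 0 → an x ≠ 0)
    (hanmul : ∀ x y : K, x ≠ 0 → y ≠ 0 → an (x * y) = an x * an y)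
    (hanres : ∀ x : K, x ≠ 0 → V.v x = 1 → an x = π x) :
    -- (i)
    (∀ (g : G) (c : F), c ≠ 0 → ∃ w : K, w ≠ 0 ∧ V.v w = g ∧ an w = c) ∧
    -- (ii)
    (∀ x₁ x₂ : K, x₁ ≠ 0 → x₂ ≠ 0 → x₁ + x₂ ≠ 0 →
      (V.v x₁ < V.v x₂ → an (x₁ + x₂) = an x₁) ∧
      (V.v x₁ = V.v x₂ → an x₁ + an x₂ ≠ 0 →
        V.v (x₁ + x₂) = V.v x₁ ∧ an (x₁ + x₂) = an x₁ + an x₂)) ∧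
    -- (iii)
    (∀ x y : K, x ≠ 0 → y ≠ 0 → (∃ u : G, V.v x * (V.v y)⁻¹ = u ^ 2) → an x = an y →
      ∃ u : K, u ≠ 0 ∧ y = u ^ 2 * x) := by
  obtain ⟨hπ0, hπ1, hadd, hmul, hne, hπsurj⟩ := hres
  -- basic facts about V.v
  have hv1 : V.v 1 = 1 := by
    have h := V.map_mul (one_ne_zero (α := K)) (one_ne_zero (α := K))
    rw [mul_one] at h
    exact left_eq_mul.mp h
  have hvinv : ∀ x : K, x ≠ 0 → V.v x⁻¹ = (V.v x)⁻¹ := by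
    intro x hx
    have h := V.map_mul hx (inv_ne_zero hx)
    rw [mul_inv_cancel₀ hx, hv1] at h
    exact (inv_eq_of_mul_eq_one_right h.symm).symm
  have hsq1 : ∀ a : G, a * a = 1 → a = 1 := by
    intro a ha
    rcases lt_trichotomy a 1 with h | h | h
    · refine absurd ha (ne_of_lt ?_)
      calc a * a < a * 1 := mul_lt_mul_right h a
        _ = a := mul_one a
        _ < 1 := h
    · exact h
    · refine absurd ha (ne_of_gt ?_)
      calc 1 < a := h
        _ = a * 1 := (mul_one a).symm
        _ < a * a := mul_lt_mul_right h a
  have hvneg : ∀ x : K, x ≠ 0 → V.v (-x) = V.v x := by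
    intro x hx
    have hm1 : V.v (-1 : K) = 1 := by
      have h := V.map_mul (neg_ne_zero.mpr (one_ne_zero (α := K)))
        (neg_ne_zero.mpr (one_ne_zero (α := K)))
      rw [neg_mul_neg, one_mul, hv1] at h
      exact hsq1 _ h.symm
    have h := V.map_mul (neg_ne_zero.mpr (one_ne_zero (α := K))) hx
    rw [neg_one_mul, hm1, one_mul] at h
    exact h
  have han1 : an 1 = 1 := by
    have h := hanmul 1 1 one_ne_zero one_ne_zero
    rw [mul_one] at h
    exact mul_left_cancel₀ (han0 1 one_ne_zero) (h.symm.trans (mul_one (an 1)).symm)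
  have haninv : ∀ x : K, x ≠ 0 → an x⁻¹ = (an x)⁻¹ := by
    intro x hx
    have h := hanmul x x⁻¹ hx (inv_ne_zero hx)
    rw [mul_inv_cancel₀ hx, han1] at h
    exact (inv_eq_of_mul_eq_one_right h.symm).symm
  -- part (i)
  have part1 : ∀ (g : G) (c : F), c ≠ 0 → ∃ w : K, w ≠ 0 ∧ V.v w = g ∧ an w = c := by
    intro g c hc
    obtain ⟨x, hx, hvx⟩ := V.surj g
    have hanx := han0 x hx
    obtain ⟨b, hbB, hπb⟩ := hπsurj (c * (an x)⁻¹)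
    have hd : c * (an x)⁻¹ ≠ 0 := mul_ne_zero hc (inv_ne_zero hanx)
    have hb : b ≠ 0 := by rintro rfl; rw [hπ0] at hπb; exact hd hπb.symm
    have hvb : V.v b = 1 := (hne b hb hbB).mp (by rw [hπb]; exact hd)
    refine ⟨b * x, mul_ne_zero hb hx, ?_, ?_⟩
    · rw [V.map_mul hb hx, hvb, one_mul, hvx]
    · rw [hanmul b x hb hx, hanres b hb hvb, hπb, inv_mul_cancel_right₀ hanx]
  -- key lemma about 1 + t
  have key : ∀ t : K, t ≠ 0 → 1 + t ≠ 0 → 1 ≤ V.v t →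
      (1 < V.v t → V.v (1 + t) = 1 ∧ an (1 + t) = 1) ∧
      (V.v t = 1 → 1 + an t ≠ 0 → V.v (1 + t) = 1 ∧ an (1 + t) = 1 + an t) := by
    intro t ht h1t hge
    have h1 : (1 : G) ≤ V.v (1 + t) := by
      have h := V.min_le_map_add (one_ne_zero (α := K)) ht h1t
      rwa [hv1, min_eq_left hge] at h
    have hmem1t : (1 + t) ∈ V.ringSet := Or.inr h1
    have hmemt : t ∈ V.ringSet := Or.inr hge
    have hmem1 : (1 : K) ∈ V.ringSet := Or.inr hv1.ge
    have hπsum : π (1 + t) = 1 + π t := by rw [hadd 1 t hmem1 hmemt, hπ1]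
    constructor
    · intro hlt
      have hπt : π t = 0 := by
        by_contra h
        exact hlt.ne' ((hne t ht hmemt).mp h)
      have hπ1t : π (1 + t) = 1 := by rw [hπsum, hπt, add_zero]
      have hv1t : V.v (1 + t) = 1 := (hne _ h1t hmem1t).mp (by rw [hπ1t]; exact one_ne_zero)
      exact ⟨hv1t, by rw [hanres _ h1t hv1t, hπ1t]⟩
    · intro hvt hant
      have hat : an t = π t := hanres t ht hvt
      have hπ1t : π (1 + t) = 1 + an t := by rw [hπsum, hat]
      have hv1t : V.v (1 + t) = 1 := (hne _ h1t hmem1t).mp (by rw [hπ1t]; exact hant)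
      exact ⟨hv1t, by rw [hanres _ h1t hv1t, hπ1t]⟩
  refine ⟨part1, ?_, ?_⟩
  -- part (ii)
  · intro x₁ x₂ hx1 hx2 hsum
    set t : K := x₂ * x₁⁻¹ with htdef
    have ht : t ≠ 0 := mul_ne_zero hx2 (inv_ne_zero hx1)
    have hfac : x₁ + x₂ = x₁ * (1 + t) := by
      rw [htdef, mul_add, mul_one, mul_comm x₂ x₁⁻¹, ← mul_assoc, mul_inv_cancel₀ hx1, one_mul]
    have h1t : 1 + t ≠ 0 := by
      intro h
      rw [hfac, h, mul_zero] at hsum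
      exact hsum rfl
    have hvt : V.v t = V.v x₂ * (V.v x₁)⁻¹ := by
      rw [V.map_mul hx2 (inv_ne_zero hx1), hvinv x₁ hx1]
    constructor
    · intro hlt
      have hgt : 1 < V.v t := by
        rw [hvt]
        have := mul_lt_mul_left hlt (V.v x₁)⁻¹
        rwa [mul_inv_cancel] at this
      have hk := ((key t ht h1t hgt.le).1 hgt).2
      rw [hfac, hanmul x₁ (1 + t) hx1 h1t, hk, mul_one]
    · intro hveq hane
      have hvt1 : V.v t = 1 := by rw [hvt, hveq, mul_inv_cancel]
      have hant : an t = an x₂ * (an x₁)⁻¹ := by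
        rw [htdef, hanmul x₂ x₁⁻¹ hx2 (inv_ne_zero hx1), haninv x₁ hx1]
      have hant' : 1 + an t ≠ 0 := by
        rw [hant]
        intro h
        apply hane
        have h2 : (1 + an x₂ * (an x₁)⁻¹) * an x₁ = 0 * an x₁ := by rw [h]
        rw [add_mul, one_mul, mul_assoc, inv_mul_cancel₀ (han0 x₁ hx1), mul_one, zero_mul] at h2
        exact h2
      obtain ⟨hv1t, han1t⟩ := (key t ht h1t hvt1.ge).2 hvt1 hant'
      constructor
      · rw [hfac, V.map_mul hx1 h1t, hv1t, mul_one]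
      · rw [hfac, hanmul x₁ (1 + t) hx1 h1t, han1t, hant, mul_add, mul_one]
        congr 1
        rw [mul_comm (an x₂) ((an x₁)⁻¹), ← mul_assoc, mul_inv_cancel₀ (han0 x₁ hx1), one_mul]
  -- part (iii)
  · rintro x y hx hy ⟨u, hu⟩ haxy
    obtain ⟨w, hw, hvw, hanw⟩ := part1 u⁻¹ 1 one_ne_zero
    set z : K := y * x⁻¹ * w⁻¹ * w⁻¹ with hzdef
    have hz : z ≠ 0 := by
      apply mul_ne_zero (mul_ne_zero (mul_ne_zero hy (inv_ne_zero hx)) (inv_ne_zero hw))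
        (inv_ne_zero hw)
    have hvz : V.v z = 1 := by
      rw [hzdef, V.map_mul (mul_ne_zero (mul_ne_zero hy (inv_ne_zero hx)) (inv_ne_zero hw))
        (inv_ne_zero hw),
        V.map_mul (mul_ne_zero hy (inv_ne_zero hx)) (inv_ne_zero hw),
        V.map_mul hy (inv_ne_zero hx), hvinv x hx, hvinv w hw, hvw]
      have : V.v y * (V.v x)⁻¹ = (u ^ 2)⁻¹ := by
        rw [← hu]
        group
      rw [this]
      group
    have hanz : an z = 1 := by
      rw [hzdef, hanmul _ _ (mul_ne_zero (mul_ne_zero hy (inv_ne_zero hx)) (inv_ne_zero hw))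
        (inv_ne_zero hw),
        hanmul _ _ (mul_ne_zero hy (inv_ne_zero hx)) (inv_ne_zero hw),
        hanmul _ _ hy (inv_ne_zero hx), haninv x hx, haninv w hw, hanw, ← haxy,
        mul_inv_cancel₀ (han0 x hx)]
      norm_num
    have hπz : π z = 1 := by rw [← hanres z hz hvz, hanz]
    obtain ⟨s, hs⟩ := hsqrt z hz hvz hπz
    have hsne : s ≠ 0 := by
      intro h
      rw [h] at hs
      simp at hs
      exact hz hs
    refine ⟨s * w, mul_ne_zero hsne hw, ?_⟩
    have : z = s ^ 2 := hs
    rw [mul_pow, ← this, hzdef]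
    field_simp
end

section
/- Let (K, val) be a valued field in which every strict unit admits a square root. Then there exists a pseudo-angular component map, i.e. a map p.an : Kˣ → Fˣ satisfying: (1) p.an(u) = π(u) for units u of the valuation ring B; (2) p.an(ux) = π(u)·p.an(x) for u ∈ Bˣ, x ∈ Kˣ; (3) for every g ∈ G and nonzero c ∈ F there is w with val(w) = g and p.an(w) = c; (4) for nonzero x₁, x₂ with x₁+x₂ ≠ 0: if val(x₁) < val(x₂) then p.an(x₁+x₂) = p.an(x₁); if val(x₁) = val(x₂) and p.an(x₁)+p.an(x₂) ≠ 0 then val(x₁+x₂) = val(x₁) and p.an(x₁+x₂) = p.an(x₁)+p.an(x₂); (5) if val(x)·val(y)⁻¹ ∈ G² and p.an(x) = p.an(y) then y = u²x for some u ∈ Kˣ; (6) for all a, u ∈ Kˣ there is k ∈ Fˣ with p.an(au²) = p.an(a)·k². -/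
/-- `pan` is a pseudo-angular component map for `V` (with residue map `π`),
i.e. it satisfies conditions (1)-(6) of the paper (stated on nonzero elements). -/
def MulValuation.IsPseudoAngular {K : Type*} [Field K] {G : Type*} [CommGroup G] [LinearOrder G] [IsOrderedMonoid G]
    {F : Type*} [Field F] (V : MulValuation K G) (π : K → F) (pan : K → F) : Prop :=
  (∀ x : K, x ≠ 0 → pan x ≠ 0) ∧
  (∀ u : K, u ≠ 0 → V.v u = 1 → pan u = π u) ∧
  (∀ u x : K, u ≠ 0 → V.v u = 1 → x ≠ 0 → pan (u * x) = π u * pan x) ∧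
  (∀ (g : G) (c : F), c ≠ 0 → ∃ w : K, w ≠ 0 ∧ V.v w = g ∧ pan w = c) ∧
  (∀ x₁ x₂ : K, x₁ ≠ 0 → x₂ ≠ 0 → x₁ + x₂ ≠ 0 →
    (V.v x₁ < V.v x₂ → pan (x₁ + x₂) = pan x₁) ∧
    (V.v x₁ = V.v x₂ → pan x₁ + pan x₂ ≠ 0 →
      V.v (x₁ + x₂) = V.v x₁ ∧ pan (x₁ + x₂) = pan x₁ + pan x₂)) ∧
  (∀ x y : K, x ≠ 0 → y ≠ 0 → (∃ u : G, V.v x * (V.v y)⁻¹ = u ^ 2) → pan x = pan y →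
    ∃ u : K, u ≠ 0 ∧ y = u ^ 2 * x) ∧
  (∀ a u : K, a ≠ 0 → u ≠ 0 → ∃ k : F, k ≠ 0 ∧ pan (a * u ^ 2) = pan a * k ^ 2)

section Auxiliary

variable {K : Type*} [Field K] {G : Type*} [CommGroup G] [LinearOrder G] [IsOrderedMonoid G]

lemma aux_sq_eq_one {a : G} (h : a ^ 2 = 1) : a = 1 := by
  rcases lt_trichotomy a 1 with h1 | h1 | h1
  · have : a * a < 1 := mul_lt_one h1 h1
    rw [← pow_two, h] at this; exact absurd this (lt_irrefl _)
  · exact h1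
  · have h2 : 1 * 1 < a * a := mul_lt_mul_of_lt_of_lt h1 h1
    rw [one_mul, ← pow_two, h] at h2; exact absurd h2 (lt_irrefl _)

lemma aux_sq_inj {a b : G} (h : a ^ 2 = b ^ 2) : a = b := by
  have : (a / b) ^ 2 = 1 := by rw [div_pow, h, div_self']
  have := aux_sq_eq_one this
  exact div_eq_one.mp this

namespace MulValuation

variable (V : MulValuation K G)

lemma v_one : V.v 1 = 1 := by
  have h := V.map_mul (one_ne_zero (α := K)) (one_ne_zero (α := K))
  rw [mul_one] at h
  have : V.v 1 * 1 = V.v 1 * V.v 1 := by rw [mul_one]; exact h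
  exact (mul_left_cancel this).symm

lemma v_inv {x : K} (hx : x ≠ 0) : V.v x⁻¹ = (V.v x)⁻¹ := by
  have h := V.map_mul hx (inv_ne_zero hx)
  rw [mul_inv_cancel₀ hx, V.v_one] at h
  exact eq_inv_of_mul_eq_one_right h.symm

lemma v_neg {x : K} (hx : x ≠ 0) : V.v (-x) = V.v x := by
  have hm1 : V.v (-1 : K) = 1 := by
    have h := V.map_mul (neg_ne_zero.mpr (one_ne_zero (α := K)))
      (neg_ne_zero.mpr (one_ne_zero (α := K)))
    rw [neg_mul_neg, one_mul, V.v_one] at h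
    exact aux_sq_eq_one (by rw [pow_two]; exact h.symm)
  have h := V.map_mul (neg_ne_zero.mpr (one_ne_zero (α := K))) hx
  rw [neg_one_mul] at h
  rw [h, hm1, one_mul]

lemma v_add_of_lt {x y : K} (hx : x ≠ 0) (hy : y ≠ 0) (hlt : V.v x < V.v y) :
    x + y ≠ 0 ∧ V.v (x + y) = V.v x := by
  have hxy : x + y ≠ 0 := by
    intro h
    have : y = -x := by linear_combination h
    rw [this, V.v_neg hx] at hlt
    exact absurd hlt (lt_irrefl _)
  refine ⟨hxy, ?_⟩
  have h1 : V.v x ≤ V.v (x + y) := by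
    have := V.min_le_map_add hx hy hxy
    rwa [min_eq_left hlt.le] at this
  have h2 : V.v (x + y) ≤ V.v x := by
    have hne : (-y : K) ≠ 0 := neg_ne_zero.mpr hy
    have hs : x + y + -y ≠ 0 := by simpa using hx
    have := V.min_le_map_add hxy hne hs
    have hx' : V.v (x + y + -y) = V.v x := by norm_num
    rw [hx', V.v_neg hy] at this
    by_contra hc
    push_neg at hc
    have : V.v x < V.v x := lt_of_lt_of_le (lt_min hc hlt) this
    exact absurd this (lt_irrefl _)
  exact le_antisymm h2 h1

/-- A section of the valuation, sending `1` to `1`, whose values at two elements of `G`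
in the same coset modulo squares differ by a square of `Kˣ`. -/
lemma exists_section : ∃ c : G → K, (∀ g, c g ≠ 0) ∧ (∀ g, V.v (c g) = g) ∧ c 1 = 1 ∧
    ∀ g₁ g₂ : G, (∃ h : G, g₁ * g₂⁻¹ = h ^ 2) → ∃ q : K, q ≠ 0 ∧ c g₁ = c g₂ * q ^ 2 := by
  classical
  -- a pointwise section `z` with `z 1 = 1`
  set z : G → K := fun g => if g = 1 then 1 else (V.surj g).choose with hzdef
  have hz0 : ∀ g, z g ≠ 0 := by
    intro g; by_cases h : g = 1
    · simp only [hzdef, if_pos h]; exact one_ne_zero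
    · simp only [hzdef, if_neg h]; exact (V.surj g).choose_spec.1
  have hzv : ∀ g, V.v (z g) = g := by
    intro g; by_cases h : g = 1
    · subst h; simp only [hzdef, if_pos rfl]; exact V.v_one
    · simp only [hzdef, if_neg h]; exact (V.surj g).choose_spec.2
  have hz1 : z 1 = 1 := by simp [hzdef]
  -- the subgroup of squares and coset representatives
  set H : Subgroup G := (powMonoidHom 2 : G →* G).range with hHdef
  have hmemH : ∀ g : G, g ∈ H ↔ ∃ h : G, g = h ^ 2 := by
    intro g
    constructor
    · rintro ⟨h, rfl⟩; exact ⟨h, rfl⟩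
    · rintro ⟨h, rfl⟩; exact ⟨h, rfl⟩
  set rep : G → G := fun g =>
    if (QuotientGroup.mk g : G ⧸ H) = 1 then 1 else ((QuotientGroup.mk g : G ⧸ H)).out
    with hrepdef
  have hrep_coset : ∀ g, (QuotientGroup.mk (rep g) : G ⧸ H) = QuotientGroup.mk g := by
    intro g
    by_cases h : (QuotientGroup.mk g : G ⧸ H) = 1
    · simp only [hrepdef, if_pos h]; rw [h]; rfl
    · simp only [hrepdef, if_neg h]; exact QuotientGroup.out_eq' _
  have hrep_sq : ∀ g, ∃ h : G, g = rep g * h ^ 2 := by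
    intro g
    have := hrep_coset g
    have hmem : (rep g)⁻¹ * g ∈ H := QuotientGroup.eq.mp this
    obtain ⟨h, hh⟩ := (hmemH _).mp hmem
    exact ⟨h, by rw [← hh]; group⟩
  have hrep_eq : ∀ g₁ g₂ : G, (∃ h : G, g₁ * g₂⁻¹ = h ^ 2) → rep g₁ = rep g₂ := by
    rintro g₁ g₂ ⟨h, hh⟩
    have hmem : g₁⁻¹ * g₂ ∈ H := by
      refine (hmemH _).mpr ⟨h⁻¹, ?_⟩
      have h2 : g₁⁻¹ * g₂ = (g₁ * g₂⁻¹)⁻¹ := by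
        rw [mul_inv, inv_inv, mul_comm]
      rw [h2, hh, ← inv_pow]
    have hcos : (QuotientGroup.mk g₁ : G ⧸ H) = QuotientGroup.mk g₂ := QuotientGroup.eq.mpr hmem
    simp only [hrepdef, hcos]
  have hrep_one : rep 1 = 1 := by
    have h1 : (QuotientGroup.mk (1 : G) : G ⧸ H) = 1 := rfl
    simp only [hrepdef, if_pos h1]
  -- choose square roots
  set sq : G → G := fun g => (hrep_sq g).choose with hsqdef
  have hsq : ∀ g, g = rep g * sq g ^ 2 := fun g => (hrep_sq g).choose_spec
  refine ⟨fun g => z (rep g) * z (sq g) ^ 2, ?_, ?_, ?_, ?_⟩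
  · intro g
    exact mul_ne_zero (hz0 _) (pow_ne_zero _ (hz0 _))
  · intro g
    have h2 : V.v (z (sq g) ^ 2) = sq g ^ 2 := by
      rw [pow_two, V.map_mul (hz0 _) (hz0 _), hzv, ← pow_two]
    rw [V.map_mul (hz0 _) (pow_ne_zero _ (hz0 _)), hzv, h2, ← hsq g]
  · have hsq1 : sq 1 = 1 := by
      have := hsq 1
      rw [hrep_one, one_mul] at this
      exact aux_sq_eq_one this.symm
    show z (rep 1) * z (sq 1) ^ 2 = 1
    rw [hrep_one, hsq1, hz1]; ring
  · intro g₁ g₂ hsqcoset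
    have hre : rep g₁ = rep g₂ := hrep_eq g₁ g₂ hsqcoset
    refine ⟨z (sq g₁) * (z (sq g₂))⁻¹, mul_ne_zero (hz0 _) (inv_ne_zero (hz0 _)), ?_⟩
    show z (rep g₁) * z (sq g₁) ^ 2 = z (rep g₂) * z (sq g₂) ^ 2 * (z (sq g₁) * (z (sq g₂))⁻¹) ^ 2
    rw [hre, mul_pow, inv_pow, mul_assoc, mul_comm (z (sq g₂) ^ 2),
      mul_assoc, inv_mul_cancel₀ (pow_ne_zero _ (hz0 _)), mul_one]

end MulValuation

end Auxiliary

theorem stmt9 {K : Type*} [Field K] {G : Type*} [CommGroup G] [LinearOrder G] [IsOrderedMonoid G]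
    {F : Type*} [Field F] (V : MulValuation K G) (π : K → F)
    (hres : V.IsResidue π)
    (hsqrt : ∀ x : K, x ≠ 0 → V.v x = 1 → π x = 1 → ∃ y : K, x = y ^ 2) :
    ∃ pan : K → F, V.IsPseudoAngular π pan := by
  classical
  obtain ⟨hπ0, hπ1, hπadd, hπmul, hπne, hπsurj⟩ := hres
  obtain ⟨c, hc0, hcv, hc1, hcsq⟩ := V.exists_section
  -- membership in the valuation ring
  have hmem : ∀ {x : K}, 1 ≤ V.v x → x ∈ V.ringSet := fun h => Or.inr h
  set pan : K → F := fun x => π (x * (c (V.v x))⁻¹) with hpandef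
  have hnorm : ∀ {x : K}, x ≠ 0 → V.v (x * (c (V.v x))⁻¹) = 1 := by
    intro x hx
    rw [V.map_mul hx (inv_ne_zero (hc0 _)), V.v_inv (hc0 _), hcv, mul_inv_cancel]
  have hnorm0 : ∀ {x : K}, x ≠ 0 → x * (c (V.v x))⁻¹ ≠ 0 := fun hx =>
    mul_ne_zero hx (inv_ne_zero (hc0 _))
  have hpan_ne : ∀ x : K, x ≠ 0 → pan x ≠ 0 := by
    intro x hx
    exact (hπne _ (hnorm0 hx) (hmem (hnorm hx).ge)).mpr (hnorm hx)
  -- π vanishes on nonzero elements with value > 1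
  have hπ_gt : ∀ {x : K}, x ≠ 0 → 1 < V.v x → π x = 0 := by
    intro x hx h
    by_contra hc'
    exact absurd ((hπne x hx (hmem h.le)).mp hc') (ne_of_gt h)
  refine ⟨pan, hpan_ne, ?_, ?_, ?_, ?_, ?_, ?_⟩
  · -- (1)
    intro u hu hvu
    simp only [hpandef]
    simp only [hvu, hc1, inv_one, mul_one]
  · -- (2)
    intro u x hu hvu hx
    have hvux : V.v (u * x) = V.v x := by rw [V.map_mul hu hx, hvu, one_mul]
    simp only [hpandef]
    simp only [hvux]
    rw [mul_assoc]
    exact hπmul u _ (hmem hvu.ge) (hmem (hnorm hx).ge)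
  · -- (3)
    intro g cf hcf
    obtain ⟨b, hbmem, hbval⟩ := hπsurj cf
    have hb0 : b ≠ 0 := by rintro rfl; rw [hπ0] at hbval; exact hcf hbval.symm
    have hvb : V.v b = 1 := (hπne b hb0 hbmem).mp (by rw [hbval]; exact hcf)
    have hv : V.v (b * c g) = g := by rw [V.map_mul hb0 (hc0 _), hvb, hcv, one_mul]
    refine ⟨b * c g, mul_ne_zero hb0 (hc0 _), hv, ?_⟩
    simp only [hpandef]
    simp only [hv]
    rw [mul_assoc, mul_inv_cancel₀ (hc0 g), mul_one, hbval]
  · -- (4)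
    intro x₁ x₂ hx1 hx2 hsum
    constructor
    · intro hlt
      have hval := (V.v_add_of_lt hx1 hx2 hlt).2
      simp only [hpandef]
      simp only [hval]
      rw [add_mul]
      have h1v : V.v (x₁ * (c (V.v x₁))⁻¹) = 1 := hnorm hx1
      have h2v : 1 < V.v (x₂ * (c (V.v x₁))⁻¹) := by
        rw [V.map_mul hx2 (inv_ne_zero (hc0 _)), V.v_inv (hc0 _), hcv]
        have := mul_lt_mul_left hlt (V.v x₁)⁻¹
        rwa [mul_inv_cancel] at this
      have h20 : x₂ * (c (V.v x₁))⁻¹ ≠ 0 := mul_ne_zero hx2 (inv_ne_zero (hc0 _))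
      rw [hπadd _ _ (hmem h1v.ge) (hmem h2v.le), hπ_gt h20 h2v, add_zero]
    · intro hveq hne
      have h1v : V.v (x₁ * (c (V.v x₁))⁻¹) = 1 := hnorm hx1
      have h2v : V.v (x₂ * (c (V.v x₁))⁻¹) = 1 := by rw [hveq]; exact hnorm hx2
      have h10 : x₁ * (c (V.v x₁))⁻¹ ≠ 0 := hnorm0 hx1
      have h20 : x₂ * (c (V.v x₁))⁻¹ ≠ 0 := mul_ne_zero hx2 (inv_ne_zero (hc0 _))
      have hsum0 : x₁ * (c (V.v x₁))⁻¹ + x₂ * (c (V.v x₁))⁻¹ ≠ 0 := by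
        rw [← add_mul]
        exact mul_ne_zero hsum (inv_ne_zero (hc0 _))
      have hπsum : π (x₁ * (c (V.v x₁))⁻¹ + x₂ * (c (V.v x₁))⁻¹) = pan x₁ + pan x₂ := by
        rw [hπadd _ _ (hmem h1v.ge) (hmem h2v.ge)]
        simp only [hpandef, hveq]
      have hvge : 1 ≤ V.v (x₁ * (c (V.v x₁))⁻¹ + x₂ * (c (V.v x₁))⁻¹) := by
        have := V.min_le_map_add h10 h20 hsum0
        rwa [h1v, h2v, min_self] at this
      have hveq1 : V.v (x₁ * (c (V.v x₁))⁻¹ + x₂ * (c (V.v x₁))⁻¹) = 1 := by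
        refine ((hπne _ hsum0 (hmem hvge)).mp ?_)
        rw [hπsum]; exact hne
      have hvad : V.v (x₁ + x₂) = V.v x₁ := by
        have heq : x₁ + x₂ = (x₁ * (c (V.v x₁))⁻¹ + x₂ * (c (V.v x₁))⁻¹) * c (V.v x₁) := by
          rw [← add_mul, mul_assoc, inv_mul_cancel₀ (hc0 _), mul_one]
        rw [heq, V.map_mul hsum0 (hc0 _), hveq1, hcv, one_mul]
      refine ⟨hvad, ?_⟩
      simp only [hpandef]
      simp only [hvad]
      rw [add_mul]
      exact hπsum
  · -- (5)
    intro x y hx hy hcoset hpeq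
    obtain ⟨u, hu⟩ := hcoset
    obtain ⟨q, hq0, hcq⟩ := hcsq (V.v y) (V.v x) ⟨u⁻¹, by
      rw [inv_pow, ← hu, mul_inv, inv_inv]; exact mul_comm _ _⟩
    set a : K := x * (c (V.v x))⁻¹ with hadef
    set b : K := y * (c (V.v y))⁻¹ with hbdef
    have ha0 : a ≠ 0 := hnorm0 hx
    have hb0 : b ≠ 0 := hnorm0 hy
    have hav : V.v a = 1 := hnorm hx
    have hbv : V.v b = 1 := hnorm hy
    have hπa : π a ≠ 0 := (hπne _ ha0 (hmem hav.ge)).mpr hav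
    have hπab : π a = π b := hpeq
    set t : K := b * a⁻¹ with htdef
    have ht0 : t ≠ 0 := mul_ne_zero hb0 (inv_ne_zero ha0)
    have htv : V.v t = 1 := by
      rw [htdef, V.map_mul hb0 (inv_ne_zero ha0), V.v_inv ha0, hbv, hav, inv_one, mul_one]
    have hπt : π t = 1 := by
      have hmul' : π b = π t * π a := by
        have : b = t * a := by rw [htdef]; field_simp
        rw [this]
        exact hπmul t a (hmem htv.ge) (hmem hav.ge)
      rw [← hπab] at hmul'
      have h2 : 1 * π a = π t * π a := by rw [one_mul]; exact hmul'
      exact (mul_right_cancel₀ hπa h2).symm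
    obtain ⟨s, hs⟩ := hsqrt t ht0 htv hπt
    have hs0 : s ≠ 0 := by
      intro h
      rw [h] at hs
      simp at hs
      exact ht0 hs
    refine ⟨s * q, mul_ne_zero hs0 hq0, ?_⟩
    have key : t * q ^ 2 * x = y := by
      rw [htdef, hbdef, hadef, hcq, mul_inv, mul_inv, inv_inv]
      field_simp
      rw [div_eq_iff (hc0 _)]
      ring
    rw [← key, hs, mul_pow]
  · -- (6)
    intro a u ha hu
    have hu2 : u ^ 2 ≠ 0 := pow_ne_zero _ hu
    have hvau : V.v (a * u ^ 2) = V.v a * V.v u ^ 2 := by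
      rw [V.map_mul ha hu2, pow_two u, V.map_mul hu hu, ← pow_two]
    obtain ⟨q, hq0, hcq⟩ := hcsq (V.v (a * u ^ 2)) (V.v a) ⟨V.v u, by
      rw [hvau, mul_comm (V.v a) (V.v u ^ 2), mul_inv_cancel_right]⟩
    have hvq : V.v q = V.v u := by
      have h1 : V.v (c (V.v (a * u ^ 2))) = V.v a * V.v u ^ 2 := by rw [hcv, hvau]
      have h2 : V.v (c (V.v (a * u ^ 2))) = V.v a * V.v q ^ 2 := by
        rw [hcq, V.map_mul (hc0 _) (pow_ne_zero _ hq0), hcv, pow_two q,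
          V.map_mul hq0 hq0, ← pow_two]
      rw [h1] at h2
      exact (aux_sq_inj (mul_left_cancel h2)).symm
    have huq0 : u * q⁻¹ ≠ 0 := mul_ne_zero hu (inv_ne_zero hq0)
    have huqv : V.v (u * q⁻¹) = 1 := by
      rw [V.map_mul hu (inv_ne_zero hq0), V.v_inv hq0, hvq, mul_inv_cancel]
    refine ⟨π (u * q⁻¹), (hπne _ huq0 (hmem huqv.ge)).mpr huqv, ?_⟩
    have key : a * u ^ 2 * (c (V.v (a * u ^ 2)))⁻¹ = (a * (c (V.v a))⁻¹) * (u * q⁻¹) ^ 2 := by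
      rw [hcq]
      field_simp
    have huq2v : V.v ((u * q⁻¹) ^ 2) = 1 := by
      rw [pow_two, V.map_mul huq0 huq0, huqv, mul_one]
    simp only [hpandef]
    rw [key, hπmul _ _ (hmem (hnorm ha).ge) (hmem huq2v.ge)]
    have : π ((u * q⁻¹) ^ 2) = π (u * q⁻¹) ^ 2 := by
      rw [pow_two, hπmul _ _ (hmem huqv.ge) (hmem huqv.ge), ← pow_two]
    rw [this]
end

section
/- Let (K, val) be a valued field in which every strict unit admits a square root, with a fixed pseudo-angular component map p.an. If x₁, x₂ ∈ Kˣ satisfy val(x₁) = val(x₂) and p.an(x₁) = p.an(x₂), then x₂ = x₁u² for some unit u of the valuation ring B with π(u²) = 1. Consequently, if instead p.an(x₁) + p.an(x₂) = 0, then val(x₁ + x₂) > val(x₁). -/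
theorem stmt10 {K : Type*} [Field K] {G : Type*} [CommGroup G] [LinearOrder G] [IsOrderedMonoid G]
    {F : Type*} [Field F] (V : MulValuation K G) (π : K → F)
    (hres : V.IsResidue π)
    (hsqrt : ∀ x : K, x ≠ 0 → V.v x = 1 → π x = 1 → ∃ y : K, x = y ^ 2)
    (pan : K → F) (hpan : V.IsPseudoAngular π pan)
    (x₁ x₂ : K) (h1 : x₁ ≠ 0) (h2 : x₂ ≠ 0) (hv : V.v x₁ = V.v x₂) :
    (pan x₁ = pan x₂ →
      ∃ u : K, u ≠ 0 ∧ V.v u = 1 ∧ π (u ^ 2) = 1 ∧ x₂ = x₁ * u ^ 2) ∧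
    (pan x₁ + pan x₂ = 0 → x₁ + x₂ = 0 ∨ V.v x₁ < V.v (x₁ + x₂)) := by
  obtain ⟨hπ0, hπ1, hπadd, hπmul, hπunit, -⟩ := hres
  obtain ⟨hne, -, hmulu, -, -, hsq, -⟩ := hpan
  -- basic facts
  have hsqone : ∀ a : G, a * a = 1 → a = 1 := by
    intro a h
    rcases lt_trichotomy a 1 with hl|he|hg
    · exact absurd h (ne_of_lt (mul_lt_one' hl hl))
    · exact he
    · exact absurd h (ne_of_gt (one_lt_mul' hg hg))
  have hv1 : V.v (1 : K) = 1 := by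
    have h := V.map_mul (one_ne_zero (α := K)) one_ne_zero
    rw [mul_one] at h
    have h2 : V.v (1 : K) * 1 = V.v 1 * V.v 1 := by rw [mul_one]; exact h
    exact (mul_left_cancel h2).symm
  have hvneg1 : V.v (-1 : K) = 1 := by
    have h := V.map_mul (neg_ne_zero.mpr (one_ne_zero (α := K))) (neg_ne_zero.mpr one_ne_zero)
    rw [neg_mul_neg, one_mul, hv1] at h
    exact hsqone _ h.symm
  have hπneg1 : π (-1 : K) = -1 := by
    have hm1 : (-1 : K) ∈ V.ringSet := Or.inr (le_of_eq hvneg1.symm)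
    have h1m : (1 : K) ∈ V.ringSet := Or.inr (le_of_eq hv1.symm)
    have := hπadd (-1) 1 hm1 h1m
    rw [neg_add_cancel, hπ0, hπ1] at this
    linear_combination -this
  -- key auxiliary claim: if pan a = pan b and v a = v b then b = a * u^2 with the stated props
  have key : ∀ a b : K, a ≠ 0 → b ≠ 0 → V.v a = V.v b → pan a = pan b →
      ∃ u : K, u ≠ 0 ∧ V.v u = 1 ∧ π (u ^ 2) = 1 ∧ b = a * u ^ 2 := by
    intro a b ha hb hvab hpab
    obtain ⟨u, hu0, hbu⟩ := hsq a b ha hb ⟨1, by rw [hvab, mul_inv_cancel, one_pow]⟩ hpab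
    have hu2ne : u ^ 2 ≠ 0 := pow_ne_zero 2 hu0
    have hvu2 : V.v (u ^ 2) = V.v u * V.v u := by
      rw [sq]; exact V.map_mul hu0 hu0
    have hvb' : V.v b = V.v (u ^ 2) * V.v a := by
      rw [hbu]; exact V.map_mul hu2ne ha
    have hvu2one : V.v (u ^ 2) = 1 := by
      have heq : V.v (u ^ 2) * V.v a = 1 * V.v a := by
        rw [one_mul, ← hvb', hvab]
      exact mul_right_cancel heq
    have hvu : V.v u = 1 := hsqone _ (hvu2 ▸ hvu2one)
    have hπu2 : π (u ^ 2) = 1 := by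
      have hpb : pan b = π (u ^ 2) * pan a := by
        rw [hbu]; exact hmulu (u ^ 2) a hu2ne hvu2one ha
      rw [← hpab] at hpb
      exact (mul_eq_right₀ (hne a ha)).mp hpb.symm
    exact ⟨u, hu0, hvu, hπu2, by rw [hbu, mul_comm]⟩
  constructor
  · exact fun h => key x₁ x₂ h1 h2 hv h
  · intro hsum
    by_cases hz : x₁ + x₂ = 0
    · exact Or.inl hz
    right
    have hnx1 : (-x₁ : K) ≠ 0 := neg_ne_zero.mpr h1
    have hvnx1 : V.v (-x₁) = V.v x₂ := by
      have : V.v (-x₁) = V.v (-1) * V.v x₁ := by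
        rw [← neg_one_mul]; exact V.map_mul (neg_ne_zero.mpr one_ne_zero) h1
      rw [this, hvneg1, one_mul, hv]
    have hpnx1 : pan (-x₁) = pan x₂ := by
      have : pan (-x₁) = π (-1) * pan x₁ := by
        rw [← neg_one_mul]
        exact hmulu (-1) x₁ (neg_ne_zero.mpr one_ne_zero) hvneg1 h1
      rw [this, hπneg1]; linear_combination -hsum
    obtain ⟨u, hu0, hvu, hπu2, hx2⟩ := key (-x₁) x₂ hnx1 h2 hvnx1 hpnx1
    have hu2ne : u ^ 2 ≠ 0 := pow_ne_zero 2 hu0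
    have hvu2one : V.v (u ^ 2) = 1 := by
      rw [sq, V.map_mul hu0 hu0, hvu, one_mul]
    -- x₁ + x₂ = x₁ * (1 - u^2)
    have hsplit : x₁ + x₂ = x₁ * (1 - u ^ 2) := by rw [hx2]; ring
    have homu : (1 : K) - u ^ 2 ≠ 0 := by
      intro h
      apply hz
      rw [hsplit, h, mul_zero]
    have hvnu2 : V.v (-(u ^ 2)) = 1 := by
      have : V.v (-(u ^ 2)) = V.v (-1) * V.v (u ^ 2) := by
        rw [← neg_one_mul]; exact V.map_mul (neg_ne_zero.mpr one_ne_zero) hu2ne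
      rw [this, hvneg1, one_mul, hvu2one]
    have hge : (1 : G) ≤ V.v (1 - u ^ 2) := by
      have := V.min_le_map_add (x := (1 : K)) (y := -(u ^ 2)) one_ne_zero
        (neg_ne_zero.mpr hu2ne) (by rw [← sub_eq_add_neg]; exact homu)
      rw [hv1, hvnu2, min_self, ← sub_eq_add_neg] at this
      exact this
    have hmem : (1 : K) - u ^ 2 ∈ V.ringSet := Or.inr hge
    have hπomu : π (1 - u ^ 2) = 0 := by
      have h1m : (1 : K) ∈ V.ringSet := Or.inr (le_of_eq hv1.symm)
      have hmu2 : (-(u ^ 2) : K) ∈ V.ringSet := Or.inr (le_of_eq hvnu2.symm)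
      have hm1 : (-1 : K) ∈ V.ringSet := Or.inr (le_of_eq hvneg1.symm)
      have hu2m : (u ^ 2 : K) ∈ V.ringSet := Or.inr (le_of_eq hvu2one.symm)
      have hπmu2 : π (-(u ^ 2)) = -1 := by
        have := hπmul (-1) (u ^ 2) hm1 hu2m
        rw [neg_one_mul, hπneg1, hπu2] at this
        rw [this]; ring
      have := hπadd 1 (-(u ^ 2)) h1m hmu2
      rw [← sub_eq_add_neg, hπ1, hπmu2] at this
      rw [this]; ring
    have hvgt : (1 : G) < V.v (1 - u ^ 2) := by
      rcases lt_or_eq_of_le hge with h|h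
      · exact h
      · exfalso
        have := (hπunit (1 - u ^ 2) homu hmem).mpr h.symm
        exact this hπomu
    rw [hsplit, V.map_mul h1 homu]
    exact lt_mul_of_one_lt_right' (V.v x₁) hvgt
end

section
/- Let M₁ and M₂ be proper quasi-quadratic modules in a field E of characteristic ≠ 2 (proper meaning Mᵢ ≠ E). If M₁ + M₂ = E, then there exists a nonzero c ∈ E with c ∈ M₁ and −c ∈ M₂. -/
lemma qq_full {E : Type*} [Field E] (h2 : (2 : E) ≠ 0) (M : Set E)
    (hadd : ∀ x ∈ M, ∀ y ∈ M, x + y ∈ M)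
    (hsq : ∀ a : E, ∀ x ∈ M, a ^ 2 * x ∈ M)
    {c : E} (hc : c ≠ 0) (h1 : c ∈ M) (h2' : -c ∈ M) : M = Set.univ := by
  ext y
  simp only [Set.mem_univ, iff_true]
  have key := hadd _ (hsq ((y / c + 1) / 2) c h1) _ (hsq ((y / c - 1) / 2) (-c) h2')
  have : ((y / c + 1) / 2) ^ 2 * c + ((y / c - 1) / 2) ^ 2 * (-c) = y := by
    field_simp
    ring
  rwa [this] at key

theorem stmt12 {E : Type*} [Field E] (h2 : (2 : E) ≠ 0)
    (M₁ M₂ : Set E)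
    (h01 : (0 : E) ∈ M₁) (hadd1 : ∀ x ∈ M₁, ∀ y ∈ M₁, x + y ∈ M₁)
    (hsq1 : ∀ a : E, ∀ x ∈ M₁, a ^ 2 * x ∈ M₁)
    (h02 : (0 : E) ∈ M₂) (hadd2 : ∀ x ∈ M₂, ∀ y ∈ M₂, x + y ∈ M₂)
    (hsq2 : ∀ a : E, ∀ x ∈ M₂, a ^ 2 * x ∈ M₂)
    (hp1 : M₁ ≠ Set.univ) (hp2 : M₂ ≠ Set.univ)
    (hsum : ∀ x : E, ∃ a ∈ M₁, ∃ b ∈ M₂, x = a + b) :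
    ∃ c : E, c ≠ 0 ∧ c ∈ M₁ ∧ -c ∈ M₂ := by
  obtain ⟨s, hs⟩ : ∃ s, s ∉ M₁ := by
    by_contra h
    push_neg at h
    exact hp1 (Set.eq_univ_of_forall h)
  obtain ⟨a₁, ha₁, b₁, hb₁, hsab⟩ := hsum s
  have hb₁0 : b₁ ≠ 0 := by
    rintro rfl
    rw [add_zero] at hsab
    exact hs (hsab ▸ ha₁)
  obtain ⟨a₂, ha₂, b₂, hb₂, heq⟩ := hsum (-b₁)
  by_cases ha₂0 : a₂ = 0
  · subst ha₂0
    rw [zero_add] at heq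
    have : -b₁ ∈ M₂ := heq ▸ hb₂
    exact absurd (qq_full h2 M₂ hadd2 hsq2 hb₁0 hb₁ this) hp2
  · refine ⟨a₂, ha₂0, ha₂, ?_⟩
    have : -a₂ = b₁ + b₂ := by linear_combination heq
    rw [this]
    exact hadd2 _ hb₁ _ hb₂
end

section
/- Let (K, val) be a 2-henselian valued field with residue field F of characteristic ≠ 2, B its valuation ring, A a subring with B ⊆ A ⊆ K, H = val(Aˣ). For g ∈ G and a proper quasi-quadratic module M in F, define Φ(M, g) = {x ∈ A \ {0} : val(x)·g⁻¹ ∈ G², (val(x)·g⁻¹ ∈ H² or val(x) > g), and p.an(x) ∈ M} ∪ {0}. Then Φ(M, g) is a quasi-quadratic module in A. -/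
/-- `Φ^A(M, ⟦g⟧)`: the quasi-quadratic module of `A` generated by `M` and the class of
`g` modulo `H²` where `H = val(Aˣ)`. -/
def MulValuation.Phi {K : Type*} [Field K] {G : Type*} [CommGroup G] [LinearOrder G] [IsOrderedMonoid G]
    {F : Type*} [Field F] (V : MulValuation K G) (A : Subring K) (pan : K → F)
    (M : Set F) (g : G) : Set K :=
  {x : K | x ≠ 0 ∧ x ∈ A ∧ (∃ u : G, V.v x * g⁻¹ = u ^ 2) ∧
    ((∃ h ∈ V.unitVals A, V.v x * g⁻¹ = h ^ 2) ∨ g < V.v x) ∧ pan x ∈ M} ∪ {0}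

theorem stmt14 {K : Type*} [Field K] {G : Type*} [CommGroup G] [LinearOrder G] [IsOrderedMonoid G]
    {F : Type*} [Field F] (V : MulValuation K G) (π : K → F)
    (hres : V.IsResidue π) (hchar : (2 : F) ≠ 0)
    (hsqrt : ∀ x : K, x ≠ 0 → V.v x = 1 → π x = 1 → ∃ y : K, x = y ^ 2)
    (pan : K → F) (hpan : V.IsPseudoAngular π pan)
    (A : Subring K) (hBA : V.ringSet ⊆ (A : Set K))
    (g : G) (M : Set F)
    (h0 : (0 : F) ∈ M) (hadd : ∀ c ∈ M, ∀ d ∈ M, c + d ∈ M)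
    (hsq : ∀ a : F, ∀ c ∈ M, a ^ 2 * c ∈ M) (hproper : M ≠ Set.univ) :
    -- `Φ(M, g)` is a quasi-quadratic module in `A`
    (0 : K) ∈ V.Phi A pan M g ∧
    V.Phi A pan M g ⊆ (A : Set K) ∧
    (∀ x ∈ V.Phi A pan M g, ∀ y ∈ V.Phi A pan M g, x + y ∈ V.Phi A pan M g) ∧
    (∀ a : K, a ∈ A → ∀ x ∈ V.Phi A pan M g, a ^ 2 * x ∈ V.Phi A pan M g) := by
  classical
  obtain ⟨hp1, -, -, -, hp5, -, hp7⟩ := hpan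
  -- basic valuation facts
  have hv1 : V.v 1 = 1 := by
    have h := V.map_mul (one_ne_zero : (1:K) ≠ 0) one_ne_zero
    rw [mul_one] at h
    exact right_eq_mul.mp h
  have sqinj : ∀ u w : G, u ^ 2 = w ^ 2 → u = w := by
    intro u w h
    rcases lt_trichotomy u w with hlt | he | hgt
    · exact absurd h (by simpa [sq] using (mul_lt_mul_of_lt_of_lt hlt hlt).ne)
    · exact he
    · exact absurd h.symm (by simpa [sq] using (mul_lt_mul_of_lt_of_lt hgt hgt).ne)
  have hvinv : ∀ x : K, x ≠ 0 → V.v x⁻¹ = (V.v x)⁻¹ := by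
    intro x hx
    have h := V.map_mul hx (inv_ne_zero hx)
    rw [mul_inv_cancel₀ hx, hv1] at h
    exact eq_inv_of_mul_eq_one_right h.symm
  have hvneg : ∀ x : K, x ≠ 0 → V.v (-x) = V.v x := by
    intro x hx
    have hm1 : V.v (-1 : K) = 1 := by
      have h := V.map_mul (neg_ne_zero.mpr (one_ne_zero : (1:K) ≠ 0))
        (neg_ne_zero.mpr (one_ne_zero : (1:K) ≠ 0))
      rw [neg_mul_neg, one_mul, hv1] at h
      exact sqinj _ 1 (by rw [one_pow, sq, ← h])
    have h := V.map_mul (neg_ne_zero.mpr (one_ne_zero : (1:K) ≠ 0)) hx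
    rw [neg_one_mul] at h
    rw [h, hm1, one_mul]
  -- facts about H = unitVals A
  set H := V.unitVals A with hH
  have hHmul : ∀ h₁ ∈ H, ∀ h₂ ∈ H, h₁ * h₂ ∈ H := by
    rintro h₁ ⟨a, ha, haA, haiA, rfl⟩ h₂ ⟨b, hb, hbA, hbiA, rfl⟩
    exact ⟨a * b, mul_ne_zero ha hb, A.mul_mem haA hbA,
      by rw [mul_inv]; exact A.mul_mem haiA hbiA, V.map_mul ha hb⟩
  have hHinv : ∀ h ∈ H, h⁻¹ ∈ H := by
    rintro h ⟨a, ha, haA, haiA, rfl⟩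
    exact ⟨a⁻¹, inv_ne_zero ha, haiA, by rwa [inv_inv], by rw [hvinv a ha]⟩
  have hHone : (1 : G) ∈ H :=
    ⟨1, one_ne_zero, A.one_mem, by simpa using A.one_mem, hv1⟩
  have hconv : ∀ h ∈ H, ∀ k : G, 1 ≤ k → k ≤ h → k ∈ H := by
    rintro h ⟨a, ha, haA, haiA, hva⟩ k hk1 hkh
    obtain ⟨x, hx, hvx⟩ := V.surj k
    have hxA : x ∈ A := hBA (Or.inr (hvx ▸ hk1))
    have hxia : x⁻¹ * a ∈ A := by
      refine hBA (Or.inr ?_)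
      rw [V.map_mul (inv_ne_zero hx) ha, hvinv x hx, hvx, hva]
      calc (1:G) = k⁻¹ * k := (inv_mul_cancel k).symm
        _ ≤ k⁻¹ * h := mul_le_mul_right hkh _
    have hxi : x⁻¹ ∈ A := by
      have := A.mul_mem hxia haiA
      rwa [mul_assoc, mul_inv_cancel₀ ha, mul_one] at this
    exact ⟨x, hx, hxA, hxi, hvx⟩
  have htri : ∀ a : K, a ≠ 0 → a ∈ A → V.v a ∈ H ∨ ∀ h ∈ H, h < V.v a := by
    intro a ha haA
    by_cases hi : a⁻¹ ∈ A
    · exact Or.inl ⟨a, ha, haA, hi, rfl⟩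
    · right
      have h1a : 1 < V.v a := by
        by_contra hle
        push_neg at hle
        exact hi (hBA (Or.inr (by rw [hvinv a ha]; simpa using inv_le_inv' hle)))
      intro h hhH
      by_contra hle
      push_neg at hle
      -- v a ≤ h, 1 < v a ⟹ v a ∈ H ⟹ a⁻¹ ∈ A, contradiction
      obtain ⟨b, hb, hbA, hbiA, hvb⟩ := hconv h hhH (V.v a) h1a.le hle
      have hab : a⁻¹ * b ∈ A := by
        refine hBA (Or.inr ?_)
        rw [V.map_mul (inv_ne_zero ha) hb, hvinv a ha, hvb]
        simp
      have : a⁻¹ ∈ A := by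
        have := A.mul_mem hab hbiA
        rwa [mul_assoc, mul_inv_cancel₀ hb, mul_one] at this
      exact hi this
  -- the condition C as a predicate on the square root u
  have hCof : ∀ x : K, x ≠ 0 → ∀ u : G, V.v x * g⁻¹ = u ^ 2 →
      ((∃ h ∈ H, V.v x * g⁻¹ = h ^ 2) ∨ g < V.v x) → u ∈ H ∨ 1 < u := by
    rintro x hx u hu (⟨h, hhH, hh⟩ | hgt)
    · exact Or.inl (sqinj u h (hu ▸ hh) ▸ hhH)
    · right
      have h1 : 1 < u ^ 2 := by
        rw [← hu, ← mul_inv_cancel g]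
        exact mul_lt_mul_left hgt g⁻¹
      by_contra hle
      push_neg at hle
      exact absurd h1 (by rw [sq]; exact not_lt.mpr (mul_le_one' hle hle))
  have hCto : ∀ x : K, x ≠ 0 → ∀ u : G, V.v x * g⁻¹ = u ^ 2 →
      (u ∈ H ∨ 1 < u) → ((∃ h ∈ H, V.v x * g⁻¹ = h ^ 2) ∨ g < V.v x) := by
    rintro x hx u hu (huH | h1u)
    · exact Or.inl ⟨u, huH, hu⟩
    · right
      have h1 : 1 < V.v x * g⁻¹ := by
        rw [hu, sq]; simpa using mul_lt_mul_of_lt_of_lt h1u h1u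
      have := mul_lt_mul_of_le_of_lt (le_refl g) h1
      rwa [mul_one, mul_comm (V.v x), ← mul_assoc, mul_inv_cancel, one_mul] at this
  -- M kills opposite nonzero pairs
  have hMneg : ∀ c : F, c ∈ M → -c ∈ M → c = 0 := by
    intro c hc hnc
    by_contra hc0
    apply hproper
    ext d
    simp only [Set.mem_univ, iff_true]
    have key : d = ((d / c + 1) / 2) ^ 2 * c + ((d / c - 1) / 2) ^ 2 * (-c) := by
      field_simp
      ring
    rw [key]
    exact hadd _ (hsq _ _ hc) _ (hsq _ _ hnc)
  -- shorthand for the defining predicate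
  have hmem : ∀ x : K, (x ≠ 0 ∧ x ∈ A ∧ (∃ u : G, V.v x * g⁻¹ = u ^ 2) ∧
      ((∃ h ∈ H, V.v x * g⁻¹ = h ^ 2) ∨ g < V.v x) ∧ pan x ∈ M) → x ∈ V.Phi A pan M g :=
    fun x hx => Or.inl hx
  have hmem' : ∀ x : K, x ∈ V.Phi A pan M g → x ≠ 0 → (x ≠ 0 ∧ x ∈ A ∧
      (∃ u : G, V.v x * g⁻¹ = u ^ 2) ∧
      ((∃ h ∈ H, V.v x * g⁻¹ = h ^ 2) ∨ g < V.v x) ∧ pan x ∈ M) := by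
    rintro x (hx | hx) hx0
    · exact hx
    · exact absurd hx hx0
  have h0mem : (0 : K) ∈ V.Phi A pan M g := Or.inr rfl
  refine ⟨h0mem, ?_, ?_, ?_⟩
  · -- Φ ⊆ A
    rintro x (hx | hx)
    · exact hx.2.1
    · simp only [Set.mem_singleton_iff] at hx
      subst hx; exact A.zero_mem
  · -- closed under addition
    have key : ∀ x y : K, x ≠ 0 → y ≠ 0 → x + y ≠ 0 → V.v x ≤ V.v y →
        x ∈ V.Phi A pan M g → y ∈ V.Phi A pan M g → x + y ∈ V.Phi A pan M g := by
      intro x y hx hy hxy hvle hxP hyP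
      obtain ⟨-, hxA, ⟨ux, hux⟩, hCx, hMx⟩ := hmem' x hxP hx
      obtain ⟨-, hyA, ⟨uy, huy⟩, hCy, hMy⟩ := hmem' y hyP hy
      rcases lt_or_eq_of_le hvle with hlt | heq
      · -- v x < v y : value and pan of sum are those of x
        have hvs : V.v (x + y) = V.v x := by
          have h1 : V.v x ≤ V.v (x + y) := by
            have := V.min_le_map_add hx hy hxy
            rwa [min_eq_left hvle] at this
          refine le_antisymm ?_ h1
          have h2 : min (V.v (x + y)) (V.v (-y)) ≤ V.v ((x + y) + (-y)) :=
            V.min_le_map_add hxy (neg_ne_zero.mpr hy) (by simpa using hx)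
          rw [add_neg_cancel_right, hvneg y hy] at h2
          rcases min_cases (V.v (x + y)) (V.v y) with ⟨he, -⟩ | ⟨he, hlt'⟩
          · rwa [he] at h2
          · rw [he] at h2; exact absurd (lt_of_lt_of_le hlt h2) (lt_irrefl _)
        have hps : pan (x + y) = pan x := (hp5 x y hx hy hxy).1 hlt
        exact hmem _ ⟨hxy, A.add_mem hxA hyA, ⟨ux, by rwa [hvs]⟩,
          by rw [hvs]; exact hCx, by rwa [hps]⟩
      · -- v x = v y
        by_cases hne : pan x + pan y = 0
        · -- impossible: M proper
          exfalso
          have : pan y = -pan x := neg_eq_of_add_eq_zero_right hne ▸ rfl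
          have hpx0 : pan x = 0 := hMneg _ hMx (this ▸ hMy)
          exact hp1 x hx hpx0
        · obtain ⟨hvs, hps⟩ := (hp5 x y hx hy hxy).2 heq hne
          exact hmem _ ⟨hxy, A.add_mem hxA hyA, ⟨ux, by rwa [hvs]⟩,
            by rw [hvs]; exact hCx, by rw [hps]; exact hadd _ hMx _ hMy⟩
    intro x hxP y hyP
    by_cases hx : x = 0
    · subst hx; simpa using hyP
    by_cases hy : y = 0
    · subst hy; simpa using hxP
    by_cases hxy : x + y = 0
    · rw [hxy]; exact h0mem
    rcases le_total (V.v x) (V.v y) with hle | hle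
    · exact key x y hx hy hxy hle hxP hyP
    · rw [add_comm]
      exact key y x hy hx (by rwa [add_comm]) hle hyP hxP
  · -- closed under multiplication by squares from A
    intro a haA x hxP
    by_cases hx : x = 0
    · subst hx; rw [mul_zero]; exact h0mem
    by_cases ha : a = 0
    · subst ha; rw [zero_pow two_ne_zero, zero_mul]; exact h0mem
    obtain ⟨-, hxA, ⟨u, hu⟩, hCx, hMx⟩ := hmem' x hxP hx
    have hax : a ^ 2 * x ≠ 0 := mul_ne_zero (pow_ne_zero 2 ha) hx
    have hva2 : V.v (a ^ 2 * x) = (V.v a) ^ 2 * V.v x := by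
      rw [sq, sq, mul_assoc, V.map_mul ha (mul_ne_zero ha hx), V.map_mul ha hx, mul_assoc]
    have hueq : V.v (a ^ 2 * x) * g⁻¹ = (V.v a * u) ^ 2 := by
      rw [hva2, mul_assoc, hu, mul_pow]
    -- the condition C for v a * u
    have hCu : u ∈ H ∨ 1 < u := hCof x hx u hu hCx
    have hCau : V.v a * u ∈ H ∨ 1 < V.v a * u := by
      rcases htri a ha haA with haH | haB
      · rcases hCu with huH | h1u
        · exact Or.inl (hHmul _ haH _ huH)
        · by_cases hm : V.v a * u ∈ H
          · exact Or.inl hm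
          · right
            by_contra hle
            push_neg at hle
            have hub : u ≤ (V.v a)⁻¹ := by
              have := mul_le_mul_right hle (V.v a)⁻¹
              rwa [mul_one, ← mul_assoc, inv_mul_cancel, one_mul] at this
            have huH : u ∈ H := hconv _ (hHinv _ haH) u h1u.le hub
            exact hm (hHmul _ haH _ huH)
      · rcases hCu with huH | h1u
        · right
          have : u⁻¹ < V.v a := haB _ (hHinv _ huH)
          have := mul_lt_mul_of_le_of_lt (le_refl u) this
          rwa [mul_inv_cancel, mul_comm] at this
        · exact Or.inr (by simpa using mul_lt_mul_of_lt_of_lt (haB 1 hHone) h1u)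
    -- the pan condition
    obtain ⟨k, hk, hpk⟩ := hp7 x a hx ha
    have hpan : pan (a ^ 2 * x) ∈ M := by
      rw [mul_comm, hpk, mul_comm]
      exact hsq k _ hMx
    exact hmem _ ⟨hax, A.mul_mem (A.pow_mem haA 2) hxA, ⟨V.v a * u, hueq⟩,
      hCto _ hax _ hueq hCau, hpan⟩
end

section
/- Let (K, val) be a 2-henselian valued field with residue field of characteristic ≠ 2, B its valuation ring, A a subring with B ⊆ A ⊆ K, H = val(Aˣ). Every quasi-quadratic module ℳ in A admits the canonical representation ℳ = ⋃_{g ∈ H ∪ G_{≥e}} Φ(M_g(ℳ), g), where M_g(ℳ) = {p.an(x) : 0 ≠ x ∈ ℳ, val(x) = g} ∪ {0} and Φ(M, g) = {x ∈ A \ {0} : val(x)g⁻¹ ∈ G², (val(x)g⁻¹ ∈ H² or val(x) > g), p.an(x) ∈ M} ∪ {0}. -/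
/-- `M_g(ℳ)`: the quasi-quadratic module of the residue field generated by `ℳ` and `g`. -/
def MulValuation.Mg {K : Type*} [Field K] {G : Type*} [CommGroup G] [LinearOrder G] [IsOrderedMonoid G]
    {F : Type*} [Field F] (V : MulValuation K G) (pan : K → F) (M : Set K) (g : G) : Set F :=
  {c : F | ∃ x : K, x ≠ 0 ∧ x ∈ M ∧ V.v x = g ∧ pan x = c} ∪ {0}

theorem stmt15 {K : Type*} [Field K] {G : Type*} [CommGroup G] [LinearOrder G] [IsOrderedMonoid G]
    {F : Type*} [Field F] (V : MulValuation K G) (π : K → F)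
    (hres : V.IsResidue π) (hchar : (2 : F) ≠ 0)
    (hsqrt : ∀ x : K, x ≠ 0 → V.v x = 1 → π x = 1 → ∃ y : K, x = y ^ 2)
    (pan : K → F) (hpan : V.IsPseudoAngular π pan)
    (A : Subring K) (hBA : V.ringSet ⊆ (A : Set K))
    (M : Set K) (hMA : M ⊆ (A : Set K)) (h0 : (0 : K) ∈ M)
    (hadd : ∀ x ∈ M, ∀ y ∈ M, x + y ∈ M)
    (hsq : ∀ a : K, a ∈ A → ∀ x ∈ M, a ^ 2 * x ∈ M) :
    M = {x : K | ∃ g : G, (g ∈ V.unitVals A ∨ 1 ≤ g) ∧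
      x ∈ V.Phi A pan (V.Mg pan M g) g} := by
  obtain ⟨hpi0, hpi1, hpiadd, hpimul, hpine, hpisurj⟩ := hres
  obtain ⟨pan_ne, pan_res, pan_mul, pan_ex, pan_add, pan_sqrel, pan_msq⟩ := hpan
  have v1 : V.v 1 = 1 := by
    have h := V.map_mul (one_ne_zero (α := K)) one_ne_zero
    rw [mul_one] at h
    exact (left_eq_mul.mp h)
  have vinv : ∀ x : K, x ≠ 0 → V.v x⁻¹ = (V.v x)⁻¹ := by
    intro x hx
    have h := V.map_mul hx (inv_ne_zero hx)
    rw [mul_inv_cancel₀ hx, v1] at h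
    exact (inv_eq_of_mul_eq_one_right h.symm).symm
  have sq1 : ∀ a : G, a ^ 2 = 1 → a = 1 := by
    intro a h
    rcases lt_trichotomy a 1 with hlt | he | hgt
    · exact absurd h (ne_of_lt (pow_lt_one' hlt two_ne_zero))
    · exact he
    · exact absurd h.symm (ne_of_lt (one_lt_pow' hgt two_ne_zero))
  have one_mem_H : (1 : G) ∈ V.unitVals A :=
    ⟨1, one_ne_zero, one_mem _, by simpa using one_mem A, v1⟩
  -- key lemma
  have main : ∀ (x m : K) (k : F), x ≠ 0 → m ≠ 0 → m ∈ M → V.v m = V.v x → k ≠ 0 →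
      pan m = pan x * k ^ 2 → x ∈ M := by
    intro x m k hx0 hm0 hmM hvm hk0 hpm
    have hmi0 : m⁻¹ ≠ 0 := inv_ne_zero hm0
    set u0 := x * m⁻¹ with hu0def
    have hu00 : u0 ≠ 0 := mul_ne_zero hx0 hmi0
    have hvu0 : V.v u0 = 1 := by
      rw [hu0def, V.map_mul hx0 hmi0, vinv m hm0, hvm, mul_inv_cancel]
    have hxum : x = u0 * m := by
      rw [hu0def]; field_simp
    have hpx : pan x = π u0 * pan m := by
      conv_lhs => rw [hxum]
      exact pan_mul u0 m hu00 hvu0 hm0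
    have hpx0 : pan x ≠ 0 := pan_ne x hx0
    have h1 : pan x * 1 = pan x * (π u0 * k ^ 2) := by
      rw [mul_one]; nth_rewrite 1 [hpx, hpm]; ring
    have hpiu0 : π u0 * k ^ 2 = 1 := (mul_left_cancel₀ hpx0 h1).symm
    obtain ⟨t, htB, hpit⟩ := hpisurj k⁻¹
    have ht0 : t ≠ 0 := by
      intro h; rw [h, hpi0] at hpit
      exact inv_ne_zero hk0 hpit.symm
    have hvt : V.v t = 1 := (hpine t ht0 htB).mp (by rw [hpit]; exact inv_ne_zero hk0)
    have hti0 : t⁻¹ ≠ 0 := inv_ne_zero ht0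
    have htiB : t⁻¹ ∈ V.ringSet := Or.inr (by rw [vinv t ht0, hvt]; simp)
    have hpiti : π t⁻¹ = k := by
      have h2 := hpimul t t⁻¹ htB htiB
      rw [mul_inv_cancel₀ ht0, hpi1, hpit] at h2
      have h3 : k⁻¹ * π t⁻¹ = k⁻¹ * k := by
        rw [← h2, inv_mul_cancel₀ hk0]
      exact mul_left_cancel₀ (inv_ne_zero hk0) h3
    have hu0B : u0 ∈ V.ringSet := Or.inr (le_of_eq hvu0.symm)
    set s := u0 * t⁻¹ * t⁻¹ with hsdef
    have hs0 : s ≠ 0 := mul_ne_zero (mul_ne_zero hu00 hti0) hti0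
    have hvuti : V.v (u0 * t⁻¹) = 1 := by
      rw [V.map_mul hu00 hti0, hvu0, vinv t ht0, hvt]; simp
    have hvs : V.v s = 1 := by
      rw [hsdef, V.map_mul (mul_ne_zero hu00 hti0) hti0, hvuti, vinv t ht0, hvt]; simp
    have hutiB : u0 * t⁻¹ ∈ V.ringSet := Or.inr (le_of_eq hvuti.symm)
    have hpis : π s = 1 := by
      rw [hsdef, hpimul _ _ hutiB htiB, hpimul _ _ hu0B htiB, hpiti]
      calc π u0 * k * k = π u0 * k ^ 2 := by ring
        _ = 1 := hpiu0
    obtain ⟨r, hr⟩ := hsqrt s hs0 hvs hpis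
    have hr0 : r ≠ 0 := by
      intro h; rw [h] at hr; simp at hr; exact hs0 hr
    have hvr : V.v r = 1 := by
      apply sq1
      have : V.v (r ^ 2) = (V.v r) ^ 2 := by rw [sq, V.map_mul hr0 hr0, sq]
      rw [← this, ← hr, hvs]
    have hrtA : r * t ∈ A :=
      hBA (Or.inr (by rw [V.map_mul hr0 ht0, hvr, hvt]; simp))
    have hxeq : x = (r * t) ^ 2 * m := by
      have h2 : (r * t) ^ 2 = s * t ^ 2 := by rw [hr]; ring
      rw [h2, hsdef, hu0def]
      field_simp
    rw [hxeq]
    exact hsq (r * t) hrtA m hmM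
  ext x
  simp only [Set.mem_setOf_eq]
  constructor
  · intro hxM
    by_cases hx0 : x = 0
    · refine ⟨1, Or.inr le_rfl, Or.inr ?_⟩
      simp [hx0]
    · set g := V.v x with hg
      have hxA : x ∈ A := hMA hxM
      have hgood : g ∈ V.unitVals A ∨ 1 ≤ g := by
        rcases le_or_gt 1 g with h | h
        · exact Or.inr h
        · refine Or.inl ⟨x, hx0, hxA, hBA (Or.inr ?_), rfl⟩
          rw [vinv x hx0]
          exact le_of_lt (one_lt_inv_of_inv h)
      refine ⟨g, hgood, Or.inl ⟨hx0, hxA, ⟨1, by rw [mul_inv_cancel]; simp⟩,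
        Or.inl ⟨1, one_mem_H, by rw [mul_inv_cancel]; simp⟩,
        Or.inl ⟨x, hx0, hxM, rfl, rfl⟩⟩⟩
  · rintro ⟨g, hg, hx⟩
    rcases hx with ⟨hx0, hxA, ⟨u, huu⟩, hC, hpanM⟩ | hx0
    · have hpx0 : pan x ≠ 0 := pan_ne x hx0
      rcases hpanM with ⟨y, hy0, hyM, hvy, hpy⟩ | h
      · obtain ⟨a, ha0, haA, hva⟩ : ∃ a : K, a ≠ 0 ∧ a ∈ A ∧ V.v a * V.v a = V.v x * g⁻¹ := by
          rcases hC with ⟨h, ⟨b, hb0, hbA, hbiA, hvb⟩, hh⟩ | hlt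
          · exact ⟨b, hb0, hbA, by rw [hvb, ← sq, ← hh]⟩
          · have h1 : (1 : G) < u ^ 2 := by
              rw [← huu, ← div_eq_mul_inv]
              exact one_lt_div'.mpr hlt
            have hu1 : 1 < u := by
              by_contra hle
              push_neg at hle
              exact absurd h1 (not_lt.mpr (pow_le_one' hle 2))
            obtain ⟨w, hw0, hvw, hpw⟩ := pan_ex u 1 one_ne_zero
            exact ⟨w, hw0, hBA (Or.inr (by rw [hvw]; exact hu1.le)),
              by rw [hvw, ← sq, ← huu]⟩
        have hmM : a ^ 2 * y ∈ M := hsq a haA y hyM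
        have ha20 : a ^ 2 ≠ 0 := pow_ne_zero 2 ha0
        have hm0 : a ^ 2 * y ≠ 0 := mul_ne_zero ha20 hy0
        have hva2 : V.v (a ^ 2) = V.v a * V.v a := by rw [sq, V.map_mul ha0 ha0]
        have hvm : V.v (a ^ 2 * y) = V.v x := by
          rw [V.map_mul ha20 hy0, hva2, hva, hvy, inv_mul_cancel_right]
        obtain ⟨k, hk0, hpk⟩ := pan_msq y a hy0 ha0
        have hpm : pan (a ^ 2 * y) = pan x * k ^ 2 := by
          rw [mul_comm, hpk, hpy]
        exact main x (a ^ 2 * y) k hx0 hm0 hmM hvm hk0 hpm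
      · exact absurd h hpx0
    · rw [Set.mem_singleton_iff] at hx0
      rw [hx0]; exact h0
end

section
/- Let (K, val) be a 2-henselian valued field, B its valuation ring in which 2 is a unit, A a subring with B ⊆ A ⊆ K, and ℳ a quasi-quadratic module in A. For a nonzero x ∈ A with val(x) = g, the following are equivalent: (1) x ∈ supp(ℳ) = ℳ ∩ (−ℳ); (2) M_g(ℳ) = F. Moreover, if M_g(ℳ) = F and h ≥ g, then M_h(ℳ) = F. In particular, ℳ = A if and only if M_e(ℳ) = F. -/
theorem stmt16 {K : Type*} [Field K] {G : Type*} [CommGroup G] [LinearOrder G] [IsOrderedMonoid G]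
    {F : Type*} [Field F] (V : MulValuation K G) (π : K → F)
    (hres : V.IsResidue π)
    (hsqrt : ∀ x : K, x ≠ 0 → V.v x = 1 → π x = 1 → ∃ y : K, x = y ^ 2)
    (pan : K → F) (hpan : V.IsPseudoAngular π pan)
    (A : Subring K) (hBA : V.ringSet ⊆ (A : Set K))
    -- `2` is a unit in the valuation ring `B`
    (h2 : (2 : K) ≠ 0 ∧ V.v 2 = 1)
    (M : Set K) (hMA : M ⊆ (A : Set K)) (h0 : (0 : K) ∈ M)
    (hadd : ∀ x ∈ M, ∀ y ∈ M, x + y ∈ M)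
    (hsq : ∀ a : K, a ∈ A → ∀ x ∈ M, a ^ 2 * x ∈ M) :
    -- (1) ↔ (2)
    (∀ x : K, x ≠ 0 → x ∈ A →
      ((x ∈ M ∧ -x ∈ M) ↔ V.Mg pan M (V.v x) = Set.univ)) ∧
    -- moreover
    (∀ g h : G, V.Mg pan M g = Set.univ → g ≤ h → V.Mg pan M h = Set.univ) ∧
    -- in particular
    (M = (A : Set K) ↔ V.Mg pan M 1 = Set.univ) := by
  obtain ⟨hπ0, hπ1, hπadd, hπmul, hπne, hπsurj⟩ := hres
  obtain ⟨pan1, pan2, pan3, pan4, pan5, pan6, pan7⟩ := hpan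
  -- basic group facts
  have sqG : ∀ a : G, a * a = 1 → a = 1 := by
    intro a ha
    rcases lt_trichotomy a 1 with h | h | h
    · have h1 : a * a < a * 1 := mul_lt_mul_right h a
      rw [mul_one] at h1
      exact absurd ha (ne_of_lt (lt_trans h1 h))
    · exact h
    · have h1 : a * 1 < a * a := mul_lt_mul_right h a
      rw [mul_one] at h1
      exact absurd ha (ne_of_gt (lt_trans h h1))
  have v1 : V.v 1 = 1 := by
    have := V.map_mul (one_ne_zero (α := K)) (one_ne_zero (α := K))
    rw [mul_one] at this
    exact (mul_left_cancel (a := V.v 1) (by rw [mul_one]; exact this)).symm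
  have vneg1 : V.v (-1 : K) = 1 := by
    have := V.map_mul (neg_ne_zero.mpr (one_ne_zero (α := K)))
      (neg_ne_zero.mpr (one_ne_zero (α := K)))
    rw [neg_mul_neg, one_mul, v1] at this
    exact sqG _ this.symm
  have vneg : ∀ x : K, x ≠ 0 → V.v (-x) = V.v x := by
    intro x hx
    have := V.map_mul (neg_ne_zero.mpr (one_ne_zero (α := K))) hx
    rw [neg_one_mul, vneg1, one_mul] at this
    exact this
  have vinv : ∀ x : K, x ≠ 0 → V.v x⁻¹ = (V.v x)⁻¹ := by
    intro x hx
    have := V.map_mul hx (inv_ne_zero hx)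
    rw [mul_inv_cancel₀ hx, v1] at this
    exact (inv_eq_of_mul_eq_one_right this.symm).symm
  -- membership helpers
  have memB : ∀ x : K, 1 ≤ V.v x → x ∈ V.ringSet := fun x h => Or.inr h
  have memBe : ∀ x : K, V.v x = 1 → x ∈ V.ringSet := fun x h => Or.inr (le_of_eq h.symm)
  have memAe : ∀ x : K, V.v x = 1 → x ∈ A := fun x h => hBA (memBe x h)
  have B1 : (1 : K) ∈ V.ringSet := memBe 1 v1
  have Bneg1 : (-1 : K) ∈ V.ringSet := memBe _ vneg1
  have B2 : (2 : K) ∈ V.ringSet := memBe 2 h2.2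
  have Bhalf : (2 : K)⁻¹ ∈ V.ringSet := memBe _ (by rw [vinv 2 h2.1, h2.2, inv_one])
  have Badd : ∀ w₁ w₂ : K, w₁ ∈ V.ringSet → w₂ ∈ V.ringSet → w₁ + w₂ ∈ V.ringSet := by
    intro w₁ w₂ h1 h2'
    by_cases hw1 : w₁ = 0
    · rwa [hw1, zero_add]
    by_cases hw2 : w₂ = 0
    · rwa [hw2, add_zero]
    have h1' : 1 ≤ V.v w₁ := h1.resolve_left hw1
    have h2'' : 1 ≤ V.v w₂ := h2'.resolve_left hw2
    by_cases hs : w₁ + w₂ = 0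
    · exact Or.inl hs
    · exact Or.inr (le_trans (le_min h1' h2'') (V.min_le_map_add hw1 hw2 hs))
  have Bmul : ∀ w₁ w₂ : K, w₁ ∈ V.ringSet → w₂ ∈ V.ringSet → w₁ * w₂ ∈ V.ringSet := by
    intro w₁ w₂ h1 h2'
    by_cases hw1 : w₁ = 0
    · rw [hw1, zero_mul]; exact Or.inl rfl
    by_cases hw2 : w₂ = 0
    · rw [hw2, mul_zero]; exact Or.inl rfl
    have h1' : 1 ≤ V.v w₁ := h1.resolve_left hw1
    have h2'' : 1 ≤ V.v w₂ := h2'.resolve_left hw2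
    refine Or.inr ?_
    rw [V.map_mul hw1 hw2]
    exact one_le_mul h1' h2''
  -- residue facts
  have πneg1 : π (-1 : K) = -1 := by
    have h := hπadd 1 (-1) B1 Bneg1
    rw [add_neg_cancel, hπ0, hπ1] at h
    exact eq_neg_of_add_eq_zero_right h.symm
  have panneg : ∀ x : K, x ≠ 0 → pan (-x) = -pan x := by
    intro x hx
    have := pan3 (-1) x (neg_ne_zero.mpr one_ne_zero) vneg1 hx
    rw [neg_one_mul, πneg1, neg_one_mul] at this
    exact this
  have lift : ∀ c : F, c ≠ 0 → ∃ a : K, a ≠ 0 ∧ V.v a = 1 ∧ π a = c := by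
    intro c hc
    obtain ⟨a, haB, haπ⟩ := hπsurj c
    have ha0 : a ≠ 0 := by rintro rfl; rw [hπ0] at haπ; exact hc haπ.symm
    exact ⟨a, ha0, (hπne a ha0 haB).mp (haπ ▸ hc), haπ⟩
  have vsq : ∀ a : K, a ≠ 0 → V.v a = 1 → V.v (a ^ 2) = 1 := by
    intro a ha hv
    rw [sq, V.map_mul ha ha, hv, one_mul]
  have πsq : ∀ a : K, V.v a = 1 → π (a ^ 2) = (π a) ^ 2 := by
    intro a hv
    rw [sq, hπmul a a (memBe a hv) (memBe a hv), sq]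
  have pansq : ∀ a x : K, a ≠ 0 → V.v a = 1 → x ≠ 0 →
      pan (a ^ 2 * x) = (π a) ^ 2 * pan x := by
    intro a x ha hv hx
    rw [pan3 (a ^ 2) x (pow_ne_zero 2 ha) (vsq a ha hv) hx, πsq a hv]
  have twoF : (2 : F) ≠ 0 := by
    have hmem := hπne 2 h2.1 B2
    have h2π : π (2 : K) = 2 := by
      have := hπadd 1 1 B1 B1
      rw [hπ1, one_add_one_eq_two] at this
      rw [this]; norm_num
    rw [h2π] at hmem
    exact hmem.mpr h2.2
  -- Key lemma (forward): if ±x ∈ M then M_{v x} = F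
  have h4 : (4 : K) ≠ 0 := by
    have h4' : (4 : K) = 2 * 2 := by norm_num
    rw [h4']; exact mul_ne_zero h2.1 h2.1
  have L1 : ∀ x : K, x ≠ 0 → x ∈ M → -x ∈ M → V.Mg pan M (V.v x) = Set.univ := by
    intro x hx hxM hnxM
    apply Set.eq_univ_of_forall
    intro c
    by_cases hc : c = 0
    · exact Or.inr (by simp [hc])
    have hpx : pan x ≠ 0 := pan1 x hx
    by_cases hc1 : c = pan x
    · exact Or.inl ⟨x, hx, hxM, rfl, hc1.symm⟩
    by_cases hc2 : c = -pan x
    · exact Or.inl ⟨-x, neg_ne_zero.mpr hx, hnxM, vneg x hx,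
        (panneg x hx).trans hc2.symm⟩
    set s := c * (pan x)⁻¹ with hs_def
    have hs : s ≠ 0 := mul_ne_zero hc (inv_ne_zero hpx)
    set p := (s + 1) / 2 with hp_def
    set q := (s - 1) / 2 with hq_def
    have hpq : p ^ 2 - q ^ 2 = s := by
      rw [hp_def, hq_def]; field_simp; ring
    have hcs : c = s * pan x := by
      rw [hs_def]; field_simp
    have hp : p ≠ 0 := by
      intro h
      apply hc2
      rw [hp_def, div_eq_zero_iff] at h
      rcases h with h' | h'
      · have hs1 : s = -1 := eq_neg_of_add_eq_zero_left h'
        rw [hcs, hs1]; ring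
      · exact absurd h' twoF
    have hq : q ≠ 0 := by
      intro h
      apply hc1
      rw [hq_def, div_eq_zero_iff] at h
      rcases h with h' | h'
      · have hs1 : s = 1 := sub_eq_zero.mp h'
        rw [hcs, hs1, one_mul]
      · exact absurd h' twoF
    obtain ⟨a, ha0, hav, haπ⟩ := lift p hp
    obtain ⟨b, hb0, hbv, hbπ⟩ := lift q hq
    have hax : a ^ 2 * x ≠ 0 := mul_ne_zero (pow_ne_zero 2 ha0) hx
    have hbx : b ^ 2 * (-x) ≠ 0 := mul_ne_zero (pow_ne_zero 2 hb0) (neg_ne_zero.mpr hx)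
    have pA : pan (a ^ 2 * x) = p ^ 2 * pan x := by
      rw [pansq a x ha0 hav hx, haπ]
    have pB : pan (b ^ 2 * (-x)) = -(q ^ 2 * pan x) := by
      rw [pansq b (-x) hb0 hbv (neg_ne_zero.mpr hx), hbπ, panneg x hx]; ring
    have hsum : pan (a ^ 2 * x) + pan (b ^ 2 * (-x)) = c := by
      rw [pA, pB]
      have : p ^ 2 * pan x - q ^ 2 * pan x = s * pan x := by rw [← hpq]; ring
      rw [sub_eq_add_neg] at this
      rw [this, hs_def]
      field_simp
    have hva : V.v (a ^ 2 * x) = V.v x := by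
      rw [V.map_mul (pow_ne_zero 2 ha0) hx, vsq a ha0 hav, one_mul]
    have hvb : V.v (b ^ 2 * (-x)) = V.v x := by
      rw [V.map_mul (pow_ne_zero 2 hb0) (neg_ne_zero.mpr hx), vsq b hb0 hbv, one_mul,
        vneg x hx]
    have hy0 : a ^ 2 * x + b ^ 2 * (-x) ≠ 0 := by
      intro h
      have hab : a ^ 2 = b ^ 2 := by
        have hx' : a ^ 2 * x = b ^ 2 * x := by linear_combination h
        exact mul_right_cancel₀ hx hx'
      have : p ^ 2 = q ^ 2 := by
        rw [← haπ, ← hbπ, ← πsq a hav, ← πsq b hbv, hab]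
      rw [this] at hpq
      simp at hpq
      exact hs hpq.symm
    obtain ⟨hv, hpansum⟩ := (pan5 _ _ hax hbx hy0).2 (hva.trans hvb.symm)
      (by rw [hsum]; exact hc)
    refine Or.inl ⟨a ^ 2 * x + b ^ 2 * (-x), hy0, ?_, hv.trans hva, hpansum.trans hsum⟩
    exact hadd _ (hsq a (memAe a hav) x hxM) _ (hsq b (memAe b hbv) (-x) hnxM)
  -- Key lemma (backward): if M_g = F then every nonzero x of value g is in M
  have L2 : ∀ g : G, V.Mg pan M g = Set.univ → ∀ x : K, x ≠ 0 → V.v x = g → x ∈ M := by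
    intro g hMg x hx hvx
    have hmem : pan x ∈ V.Mg pan M g := by rw [hMg]; trivial
    rcases hmem with ⟨y, hy0, hyM, hyv, hyp⟩ | hmem
    · obtain ⟨u, hu0, hux⟩ := pan6 y x hy0 hx
        ⟨1, by rw [hyv, hvx]; simp⟩ hyp
      have hvu : V.v u = 1 := by
        have h1 : V.v x = V.v (u ^ 2) * V.v y :=
          hux ▸ V.map_mul (pow_ne_zero 2 hu0) hy0
        rw [sq, V.map_mul hu0 hu0, hyv, ← hvx] at h1
        have : V.v u * V.v u = 1 := by
          have := mul_right_cancel (a := V.v u * V.v u) (b := V.v x) (c := 1) ?_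
          · exact this
          · rw [one_mul, ← h1]
        exact sqG _ this
      rw [hux]
      exact hsq u (memAe u hvu) y hyM
    · exact absurd hmem (pan1 x hx)
  -- everything of value ≥ g is in M, when M_g = F
  have Ball : ∀ g : G, V.Mg pan M g = Set.univ → ∀ z : K, z ≠ 0 → g ≤ V.v z → z ∈ M := by
    intro g hMg z hz hle
    have h1mem : (1 : F) ∈ V.Mg pan M g := by rw [hMg]; trivial
    rcases h1mem with ⟨x, hx0, hxM, hxv, _⟩ | h1mem
    swap
    · exact absurd h1mem one_ne_zero
    have hnxM : -x ∈ M := L2 g hMg (-x) (neg_ne_zero.mpr hx0) ((vneg x hx0).trans hxv)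
    set b := z * x⁻¹ with hb_def
    have hb0 : b ≠ 0 := mul_ne_zero hz (inv_ne_zero hx0)
    have hbB : b ∈ V.ringSet := by
      refine Or.inr ?_
      rw [hb_def, V.map_mul hz (inv_ne_zero hx0), vinv x hx0, hxv]
      calc (1 : G) = g * g⁻¹ := (mul_inv_cancel g).symm
        _ ≤ V.v z * g⁻¹ := mul_le_mul_left hle g⁻¹
    set p := (b + 1) * 2⁻¹ with hp_def
    set q := (b + (-1)) * 2⁻¹ with hq_def
    have hpB : p ∈ V.ringSet := Bmul _ _ (Badd _ _ hbB B1) Bhalf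
    have hqB : q ∈ V.ringSet := Bmul _ _ (Badd _ _ hbB Bneg1) Bhalf
    have hid : p ^ 2 * x + q ^ 2 * (-x) = z := by
      have hbx : b * x = z := by
        rw [hb_def, mul_assoc, inv_mul_cancel₀ hx0, mul_one]
      rw [hp_def, hq_def, ← hbx]
      field_simp [hx0, h4]
      linear_combination z * x⁻¹ * inv_mul_cancel₀ h4
    rw [← hid]
    exact hadd _ (hsq p (hBA hpB) x hxM) _ (hsq q (hBA hqB) (-x) hnxM)
  refine ⟨?_, ?_, ?_⟩
  · intro x hx hxA
    constructor
    · rintro ⟨h1, h2⟩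
      exact L1 x hx h1 h2
    · intro hMg
      exact ⟨L2 _ hMg x hx rfl, L2 _ hMg (-x) (neg_ne_zero.mpr hx) (vneg x hx)⟩
  · intro g h hMg hgh
    apply Set.eq_univ_of_forall
    intro c
    by_cases hc : c = 0
    · exact Or.inr (by simp [hc])
    obtain ⟨w, hw0, hwv, hwp⟩ := pan4 h c hc
    exact Or.inl ⟨w, hw0, Ball g hMg w hw0 (hwv ▸ hgh), hwv, hwp⟩
  · constructor
    · intro hMeq
      have h1M : (1 : K) ∈ M := by rw [hMeq]; exact A.one_mem
      have h1M' : (-1 : K) ∈ M := by rw [hMeq]; exact A.neg_mem A.one_mem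
      have := L1 1 one_ne_zero h1M h1M'
      rwa [v1] at this
    · intro hMg
      refine Set.Subset.antisymm hMA ?_
      intro a haA
      by_cases ha : a = 0
      · rw [ha]; exact h0
      have h1M : (1 : K) ∈ M := L2 1 hMg 1 one_ne_zero v1
      have hn1M : (-1 : K) ∈ M := L2 1 hMg (-1) (neg_ne_zero.mpr one_ne_zero) vneg1
      have hhalfA : (2 : K)⁻¹ ∈ A := hBA Bhalf
      have hpA : (a + 1) * 2⁻¹ ∈ A := A.mul_mem (A.add_mem haA A.one_mem) hhalfA
      have hqA : (a + (-1)) * 2⁻¹ ∈ A := A.mul_mem (A.add_mem haA (A.neg_mem A.one_mem)) hhalfA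
      have hid : ((a + 1) * 2⁻¹) ^ 2 * 1 + ((a + (-1)) * 2⁻¹) ^ 2 * (-1) = a := by
        field_simp [h4]
        linear_combination a * inv_mul_cancel₀ h4
      have : ((a + 1) * 2⁻¹) ^ 2 * 1 + ((a + (-1)) * 2⁻¹) ^ 2 * (-1) ∈ M :=
        hadd _ (hsq _ hpA 1 h1M) _ (hsq _ hqA (-1) hn1M)
      rwa [hid] at this
end

section
/- Let (K, val) be a valued field whose residue field has characteristic two, in which every strict unit admits a square root, and let A be a subring containing the valuation ring B. Then every element x ∈ Kˣ \ Bˣ is a sum of two squares u² + v² with val(u) = val(v) = min(e, val(x)); moreover if x ∈ A then u, v can be chosen in A. Consequently: if ℳ is a quasi-quadratic module of A, x ∈ ℳ, y ∈ A and val(y) > val(x), then y ∈ ℳ; and if ℳ contains an element x with val(x) < e, then ℳ = A. -/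
theorem stmt18 {K : Type*} [Field K] {G : Type*} [CommGroup G] [LinearOrder G] [IsOrderedMonoid G]
    {F : Type*} [Field F] (V : MulValuation K G) (π : K → F)
    (hres : V.IsResidue π)
    -- the residue field has characteristic two
    (hchar2 : (2 : F) = 0)
    (hsqrt : ∀ x : K, x ≠ 0 → V.v x = 1 → π x = 1 → ∃ y : K, x = y ^ 2)
    (A : Subring K) (hBA : V.ringSet ⊆ (A : Set K)) :
    -- basic lemma: every `x ∈ Kˣ \ Bˣ` is a sum of two squares of the right value
    (∀ x : K, x ≠ 0 → V.v x ≠ 1 →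
      ∃ u w : K, u ≠ 0 ∧ w ≠ 0 ∧ x = u ^ 2 + w ^ 2 ∧
        V.v u = min 1 (V.v x) ∧ V.v w = min 1 (V.v x) ∧
        (x ∈ A → u ∈ A ∧ w ∈ A)) ∧
    -- consequences for quasi-quadratic modules of `A`
    (∀ M : Set K, M ⊆ (A : Set K) → (0 : K) ∈ M →
      (∀ x ∈ M, ∀ y ∈ M, x + y ∈ M) → (∀ a : K, a ∈ A → ∀ x ∈ M, a ^ 2 * x ∈ M) →
      (∀ x ∈ M, ∀ y : K, y ∈ A → x ≠ 0 → (y = 0 ∨ V.v x < V.v y) → y ∈ M) ∧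
      (∀ x ∈ M, x ≠ 0 → V.v x < 1 → M = (A : Set K))) := by

  obtain ⟨h0, h1, hadd, hmul, hne, hsur⟩ := hres
  -- basic facts about the valuation
  have hsq1 : ∀ a : G, a * a = 1 → a = 1 := by
    intro a ha
    rcases lt_trichotomy a 1 with h | h | h
    · exact absurd ha (by
        have : a * a < 1 * a := mul_lt_mul_left h a
        rw [one_mul] at this
        exact ne_of_lt (this.trans h))
    · exact h
    · exact absurd ha (by
        have : 1 * a < a * a := mul_lt_mul_left h a
        rw [one_mul] at this
        exact (ne_of_lt (h.trans this)).symm)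
  have hv1 : V.v 1 = 1 := by
    have := V.map_mul (one_ne_zero (α := K)) (one_ne_zero (α := K))
    rw [mul_one] at this
    exact (left_eq_mul.mp this)
  have hvinv : ∀ x : K, x ≠ 0 → V.v x⁻¹ = (V.v x)⁻¹ := by
    intro x hx
    have := V.map_mul hx (inv_ne_zero hx)
    rw [mul_inv_cancel₀ hx, hv1] at this
    exact (inv_eq_of_mul_eq_one_right this.symm).symm
  have hvneg1 : V.v (-1 : K) = 1 := by
    have := V.map_mul (neg_ne_zero.mpr (one_ne_zero (α := K)))
      (neg_ne_zero.mpr (one_ne_zero (α := K)))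
    rw [neg_mul_neg, one_mul, hv1] at this
    exact hsq1 _ this.symm
  have hvneg : ∀ x : K, x ≠ 0 → V.v (-x) = V.v x := by
    intro x hx
    have := V.map_mul (neg_ne_zero.mpr (one_ne_zero (α := K))) hx
    rw [neg_one_mul, hvneg1, one_mul] at this
    exact this
  have hpizero : ∀ x : K, x ≠ 0 → 1 ≤ V.v x → V.v x ≠ 1 → π x = 0 := by
    intro x hx hle hvx
    by_contra h
    exact hvx ((hne x hx (Or.inr hle)).mp h)
  -- -1 is a strict unit, hence a square : get i with i^2 = -1
  have hpm1 : π (-1 : K) = 1 := by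
    have hmem : (-1 : K) ∈ V.ringSet := Or.inr (le_of_eq hvneg1.symm)
    have h1mem : (1 : K) ∈ V.ringSet := Or.inr (le_of_eq hv1.symm)
    have := hadd (-1) 1 hmem h1mem
    rw [neg_add_cancel, h0, h1] at this
    have hneg : π (-1 : K) = -1 := by linear_combination -this
    rw [hneg]
    linear_combination -hchar2
  obtain ⟨i, hi⟩ := hsqrt (-1) (neg_ne_zero.mpr one_ne_zero) hvneg1 hpm1
  have hi0 : i ≠ 0 := by
    rintro rfl
    simp at hi
  have hvi : V.v i = 1 := by
    apply hsq1
    have := V.map_mul hi0 hi0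
    rw [← sq, ← hi, hvneg1] at this
    exact this.symm
  have hiA : i ∈ A := hBA (Or.inr (le_of_eq hvi.symm))
  -- key: 1 + z is a square of an element of value 1, for v z > 1
  have hstrict : ∀ z : K, z ≠ 0 → 1 < V.v z →
      ∃ s : K, s ≠ 0 ∧ V.v s = 1 ∧ 1 + z = s ^ 2 := by
    intro z hz hvz
    have hz1 : (1 : K) + z ≠ 0 := by
      intro h
      have : z = -1 := by linear_combination h
      rw [this, hvneg1] at hvz
      exact lt_irrefl _ hvz
    have hle : 1 ≤ V.v (1 + z) := by
      have := V.min_le_map_add (one_ne_zero (α := K)) hz hz1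
      rw [hv1, min_eq_left (le_of_lt hvz)] at this
      exact this
    have hge : V.v (1 + z) ≤ 1 := by
      by_contra h
      push_neg at h
      have hne0 : (1 + z) + (-z) ≠ 0 := by
        intro hc; apply (one_ne_zero (α := K)); linear_combination hc
      have := V.min_le_map_add hz1 (neg_ne_zero.mpr hz) hne0
      have heq : (1 + z) + (-z) = 1 := by ring
      rw [heq, hv1, hvneg z hz] at this
      exact absurd this (not_le.mpr (lt_min h hvz))
    have hveq : V.v (1 + z) = 1 := le_antisymm hge hle
    have hpi : π (1 + z) = 1 := by
      have hmz : z ∈ V.ringSet := Or.inr (le_of_lt hvz)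
      have := hadd 1 z (Or.inr (le_of_eq hv1.symm)) hmz
      rw [h1, hpizero z hz (le_of_lt hvz) (ne_of_gt hvz)] at this
      rw [this, add_zero]
    obtain ⟨s, hs⟩ := hsqrt (1 + z) hz1 hveq hpi
    have hs0 : s ≠ 0 := by
      rintro rfl
      rw [zero_pow (by norm_num)] at hs
      exact hz1 hs
    have hvs : V.v s = 1 := by
      apply hsq1
      have := V.map_mul hs0 hs0
      rw [← sq, ← hs, hveq] at this
      exact this.symm
    exact ⟨s, hs0, hvs, hs⟩
  -- the main lemma
  have hmain : ∀ x : K, x ≠ 0 → V.v x ≠ 1 →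
      ∃ u w : K, u ≠ 0 ∧ w ≠ 0 ∧ x = u ^ 2 + w ^ 2 ∧
        V.v u = min 1 (V.v x) ∧ V.v w = min 1 (V.v x) ∧
        (x ∈ A → u ∈ A ∧ w ∈ A) := by
    intro x hx hvx
    rcases lt_or_gt_of_ne hvx with hlt | hgt
    · -- v x < 1 : use 1 + x⁻¹ = t², x = (x t)² + (i x)²
      have hxi : x⁻¹ ≠ 0 := inv_ne_zero hx
      have hvxi : 1 < V.v x⁻¹ := by
        rw [hvinv x hx]
        exact Left.one_lt_inv_iff.mpr hlt
      obtain ⟨t, ht0, hvt, ht⟩ := hstrict x⁻¹ hxi hvxi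
      refine ⟨x * t, i * x, mul_ne_zero hx ht0, mul_ne_zero hi0 hx, ?_, ?_, ?_, ?_⟩
      · have h1 : (x * t) ^ 2 = x ^ 2 + x := by
          rw [mul_pow, ← ht]
          field_simp
        have h2 : (i * x) ^ 2 = -(x ^ 2) := by
          rw [mul_pow, ← hi]
          ring
        rw [h1, h2]; ring
      · rw [V.map_mul hx ht0, hvt, mul_one, min_eq_right (le_of_lt hlt)]
      · rw [V.map_mul hi0 hx, hvi, one_mul, min_eq_right (le_of_lt hlt)]
      · intro hxA
        have htA : t ∈ A := hBA (Or.inr (le_of_eq hvt.symm))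
        exact ⟨A.mul_mem hxA htA, A.mul_mem hiA hxA⟩
    · -- v x > 1 : x = s² + i² where s² = 1 + x
      obtain ⟨s, hs0, hvs, hs⟩ := hstrict x hx hgt
      refine ⟨s, i, hs0, hi0, ?_, ?_, ?_, ?_⟩
      · rw [← hs, ← hi]; ring
      · rw [hvs, min_eq_left (le_of_lt hgt)]
      · rw [hvi, min_eq_left (le_of_lt hgt)]
      · intro _
        exact ⟨hBA (Or.inr (le_of_eq hvs.symm)), hiA⟩
  refine ⟨hmain, ?_⟩
  intro M hMA hM0 hMadd hMsq
  have parta : ∀ x ∈ M, ∀ y : K, y ∈ A → x ≠ 0 → (y = 0 ∨ V.v x < V.v y) → y ∈ M := by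
    intro x hxM y hyA hx hcase
    by_cases hy : y = 0
    · subst hy; exact hM0
    have hlt : V.v x < V.v y := by
      rcases hcase with h | h
      · exact absurd h hy
      · exact h
    have hq0 : y / x ≠ 0 := div_ne_zero hy hx
    have hvq : 1 < V.v (y / x) := by
      rw [div_eq_mul_inv, V.map_mul hy (inv_ne_zero hx), hvinv x hx, ← div_eq_mul_inv]
      exact one_lt_div'.mpr hlt
    obtain ⟨u, w, hu0, hw0, hsum, hvu, hvw, _⟩ := hmain (y / x) hq0 (ne_of_gt hvq)
    have hmin : min 1 (V.v (y / x)) = 1 := min_eq_left (le_of_lt hvq)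
    rw [hmin] at hvu hvw
    have huA : u ∈ A := hBA (Or.inr (le_of_eq hvu.symm))
    have hwA : w ∈ A := hBA (Or.inr (le_of_eq hvw.symm))
    have hy2 : y = u ^ 2 * x + w ^ 2 * x := by
      have := (div_eq_iff hx).mp hsum
      linear_combination this
    rw [hy2]
    exact hMadd _ (hMsq u huA x hxM) _ (hMsq w hwA x hxM)
  refine ⟨parta, ?_⟩
  intro x hxM hx hvx
  apply Set.Subset.antisymm hMA
  intro y hyA
  by_cases hy : y = 0
  · subst hy; exact hM0
  rcases lt_or_ge (V.v x) (V.v y) with h | h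
  · exact parta x hxM y hyA hx (Or.inr h)
  · have hy1 : V.v y < 1 := lt_of_le_of_lt h hvx
    have hzM : y ^ 2 * x ∈ M := hMsq y hyA x hxM
    have hz0 : y ^ 2 * x ≠ 0 := mul_ne_zero (pow_ne_zero 2 hy) hx
    have hvz : V.v (y ^ 2 * x) < V.v y := by
      have hpow : V.v (y ^ 2) = V.v y * V.v y := by
        rw [sq, V.map_mul hy hy]
      rw [V.map_mul (pow_ne_zero 2 hy) hx, hpow]
      calc V.v y * V.v y * V.v x = V.v y * (V.v y * V.v x) := mul_assoc _ _ _
        _ < V.v y * 1 := by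
            apply mul_lt_mul_right
            calc V.v y * V.v x < 1 * V.v x := mul_lt_mul_left hy1 _
              _ = V.v x := one_mul _
              _ < 1 := hvx
        _ = V.v y := mul_one _
    exact parta _ hzM y hyA hz0 (Or.inr hvz)
end

section
/- Let (K, val) be a 2-henselian valued field whose residue field F is a euclidean field, admitting an angular component map an : Kˣ → Fˣ. Then K is pythagorean: every sum of two squares in K is a square in K. -/
theorem stmt19 {K : Type*} [Field K] {G : Type*} [CommGroup G] [LinearOrder G] [IsOrderedMonoid G]
    {F : Type*} [Field F] (V : MulValuation K G) (π : K → F)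
    (hres : V.IsResidue π)
    -- 2-henselian: every strict unit admits a square root
    (hsqrt : ∀ x : K, x ≠ 0 → V.v x = 1 → π x = 1 → ∃ y : K, x = y ^ 2)
    -- the residue field `F` is euclidean: formally real and `F = F² ∪ (−F²)`
    (heuclid : ∀ c : F, (∃ d : F, c = d ^ 2) ∨ ∃ d : F, c = -(d ^ 2))
    (hreal : ∀ (n : ℕ) (f : Fin n → F), (∑ i, (f i) ^ 2) = 0 → ∀ i, f i = 0)
    -- an angular component map: a group homomorphism `Kˣ → Fˣ` restricting to `π` on `Bˣ`
    (an : K → F)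
    (han0 : ∀ x : K, x ≠ 0 → an x ≠ 0)
    (hanmul : ∀ x y : K, x ≠ 0 → y ≠ 0 → an (x * y) = an x * an y)
    (hanres : ∀ x : K, x ≠ 0 → V.v x = 1 → an x = π x) :
    -- `K` is pythagorean
    ∀ a b : K, ∃ c : K, a ^ 2 + b ^ 2 = c ^ 2 := by
  obtain ⟨hπ0, hπ1, hπadd, hπmul, hπne, hπsurj⟩ := hres
  -- basic valuation facts
  have hv1 : V.v 1 = 1 := by
    have h := V.map_mul (one_ne_zero : (1:K) ≠ 0) one_ne_zero
    rw [one_mul] at h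
    exact right_eq_mul.mp h
  have hsq1 : ∀ g : G, g * g = 1 → g = 1 := by
    intro g h
    rcases lt_trichotomy g 1 with h1 | h1 | h1
    · exact absurd h (ne_of_lt (mul_lt_one' h1 h1))
    · exact h1
    · exact absurd h.symm (ne_of_lt (one_lt_mul'' h1 h1))
  have hvneg1 : V.v (-1 : K) = 1 := by
    have h := V.map_mul (neg_ne_zero.mpr (one_ne_zero : (1:K) ≠ 0))
      (neg_ne_zero.mpr (one_ne_zero : (1:K) ≠ 0))
    rw [neg_mul_neg, one_mul, hv1] at h
    exact hsq1 _ h.symm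
  have hvneg : ∀ x : K, x ≠ 0 → V.v (-x) = V.v x := by
    intro x hx
    have h := V.map_mul (neg_ne_zero.mpr (one_ne_zero : (1:K) ≠ 0)) hx
    rw [neg_one_mul, hvneg1, one_mul] at h
    exact h
  have hvinv : ∀ x : K, x ≠ 0 → V.v x⁻¹ = (V.v x)⁻¹ := by
    intro x hx
    have h := V.map_mul hx (inv_ne_zero hx)
    rw [mul_inv_cancel₀ hx, hv1] at h
    exact (inv_eq_of_mul_eq_one_right h.symm).symm
  -- if v x < v y then v (x+y) = v x
  have hvadd : ∀ x y : K, x ≠ 0 → y ≠ 0 → x + y ≠ 0 → V.v x < V.v y →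
      V.v (x + y) = V.v x := by
    intro x y hx hy hxy hlt
    have h1 : V.v x ≤ V.v (x + y) := by
      have := V.min_le_map_add hx hy hxy
      rwa [min_eq_left hlt.le] at this
    have h2 : V.v (x + y) ≤ V.v x := by
      have hne : x + y + -y ≠ 0 := by simpa using hx
      have h := V.min_le_map_add hxy (neg_ne_zero.mpr hy) hne
      rw [add_neg_cancel_right, hvneg y hy] at h
      by_contra hcon
      push_neg at hcon
      have : V.v x < min (V.v (x + y)) (V.v y) := lt_min hcon hlt
      exact absurd (this.trans_le h) (lt_irrefl _)
    exact le_antisymm h2 h1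
  -- key lemma for strict units: 1 < v t implies 1 + t^2 is a square
  have key2 : ∀ t : K, t ≠ 0 → 1 < V.v t → ∃ c : K, 1 + t ^ 2 = c ^ 2 := by
    intro t ht hvt
    have ht2 : t ^ 2 ≠ 0 := pow_ne_zero 2 ht
    have hvt2 : V.v (t ^ 2) = V.v t * V.v t := by
      rw [sq]; exact V.map_mul ht ht
    have hvt2gt : 1 < V.v (t ^ 2) := by
      rw [hvt2]
      exact one_lt_mul'' hvt hvt
    have hne : 1 + t ^ 2 ≠ 0 := by
      intro h
      have : t ^ 2 = -1 := by linear_combination h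
      rw [this, hvneg1] at hvt2gt
      exact lt_irrefl _ hvt2gt
    have hv : V.v (1 + t ^ 2) = 1 := by
      rw [hvadd 1 (t ^ 2) one_ne_zero ht2 hne (by rw [hv1]; exact hvt2gt), hv1]
    have hmem1 : (1:K) ∈ V.ringSet := Or.inr (by rw [hv1])
    have hmemt : t ^ 2 ∈ V.ringSet := Or.inr hvt2gt.le
    have hπt2 : π (t ^ 2) = 0 := by
      by_contra h
      exact absurd ((hπne _ ht2 hmemt).mp h) (ne_of_gt hvt2gt)
    have hπv : π (1 + t ^ 2) = 1 := by
      rw [hπadd 1 (t ^ 2) hmem1 hmemt, hπ1, hπt2, add_zero]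
    obtain ⟨y, hy⟩ := hsqrt (1 + t ^ 2) hne hv hπv
    exact ⟨y, hy⟩
  -- key lemma for everything
  have key : ∀ t : K, ∃ c : K, 1 + t ^ 2 = c ^ 2 := by
    intro t
    by_cases ht : t = 0
    · exact ⟨1, by rw [ht]; ring⟩
    by_cases h0 : 1 + t ^ 2 = 0
    · exact ⟨0, by rw [h0]; ring⟩
    rcases lt_trichotomy (V.v t) 1 with hvt | hvt | hvt
    · -- v t < 1 : use t⁻¹
      have hti : t⁻¹ ≠ 0 := inv_ne_zero ht
      have : 1 < V.v t⁻¹ := by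
        rw [hvinv t ht]
        exact one_lt_inv_of_inv hvt
      obtain ⟨c, hc⟩ := key2 t⁻¹ hti this
      refine ⟨t * c, ?_⟩
      have : 1 + t ^ 2 = t ^ 2 * (1 + (t⁻¹) ^ 2) := by
        field_simp
        ring
      rw [this, hc]
      ring
    · -- v t = 1 : the unit case
      have hmem1 : (1:K) ∈ V.ringSet := Or.inr (by rw [hv1])
      have hmemt : t ∈ V.ringSet := Or.inr hvt.ge
      have hπtne : π t ≠ 0 := (hπne t ht hmemt).mpr hvt
      have hπt2 : π (t ^ 2) = π t * π t := by rw [sq]; exact hπmul t t hmemt hmemt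
      have hmemt2 : t ^ 2 ∈ V.ringSet := by
        refine Or.inr ?_
        have : V.v (t ^ 2) = 1 := by rw [sq, V.map_mul ht ht, hvt, one_mul]
        rw [this]
      have hmemsum : 1 + t ^ 2 ∈ V.ringSet := by
        refine Or.inr ?_
        have h := V.min_le_map_add (one_ne_zero : (1:K) ≠ 0) (pow_ne_zero 2 ht) h0
        have hvt2 : V.v (t ^ 2) = 1 := by rw [sq, V.map_mul ht ht, hvt, one_mul]
        rwa [hv1, hvt2, min_self] at h
      have hπsum : π (1 + t ^ 2) = 1 + π t ^ 2 := by
        rw [hπadd 1 (t ^ 2) hmem1 hmemt2, hπ1, hπt2, sq]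
      have hsumne : (1:F) + π t ^ 2 ≠ 0 := by
        intro h
        have h2 : ∑ i, (![1, π t] i) ^ 2 = 0 := by
          rw [Fin.sum_univ_two]
          show (1:F) ^ 2 + π t ^ 2 = 0
          linear_combination h
        have := hreal 2 ![1, π t] h2 0
        exact one_ne_zero this
      have hπsumne : π (1 + t ^ 2) ≠ 0 := by rw [hπsum]; exact hsumne
      have hvsum : V.v (1 + t ^ 2) = 1 := (hπne _ h0 hmemsum).mp hπsumne
      -- euclidean: 1 + (π t)^2 is a square d^2 with d ≠ 0
      rcases heuclid (1 + π t ^ 2) with ⟨d, hd⟩ | ⟨d, hd⟩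
      · have hdne : d ≠ 0 := by
          intro h; rw [h] at hd; simp at hd; exact hsumne hd
        -- lift d to a unit w of the valuation ring
        obtain ⟨w, hwmem, hwπ⟩ := hπsurj d
        have hw0 : w ≠ 0 := by intro h; rw [h, hπ0] at hwπ; exact hdne hwπ.symm
        have hvw : V.v w = 1 := (hπne w hw0 hwmem).mp (hwπ ▸ hdne)
        have hwi : w⁻¹ ≠ 0 := inv_ne_zero hw0
        have hvwi : V.v w⁻¹ = 1 := by rw [hvinv w hw0, hvw, inv_one]
        have hmemwi : w⁻¹ ∈ V.ringSet := Or.inr hvwi.ge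
        have hπwi : π w⁻¹ = d⁻¹ := by
          have h := hπmul w w⁻¹ hwmem hmemwi
          rw [mul_inv_cancel₀ hw0, hπ1, hwπ] at h
          field_simp at h ⊢
          linear_combination h.symm
        -- x = (1+t^2) * w⁻¹ * w⁻¹ is a strict unit
        set x := (1 + t ^ 2) * w⁻¹ * w⁻¹ with hxdef
        have hx0 : x ≠ 0 := by
          apply mul_ne_zero (mul_ne_zero h0 hwi) hwi
        have hvx : V.v x = 1 := by
          rw [hxdef, V.map_mul (mul_ne_zero h0 hwi) hwi, V.map_mul h0 hwi,
            hvsum, hvwi, one_mul, one_mul]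
        have hmemx1 : (1 + t ^ 2) * w⁻¹ ∈ V.ringSet := by
          refine Or.inr ?_
          rw [V.map_mul h0 hwi, hvsum, hvwi, one_mul]
        have hπx : π x = 1 := by
          rw [hxdef, hπmul _ _ hmemx1 hmemwi, hπmul _ _ hmemsum hmemwi,
            hπsum, hπwi, hd]
          field_simp
        obtain ⟨y, hy⟩ := hsqrt x hx0 hvx hπx
        have hxx : x * w ^ 2 = (1 + t ^ 2) * (w⁻¹ * w) * (w⁻¹ * w) := by
          rw [hxdef]; ring
        rw [inv_mul_cancel₀ hw0, mul_one, mul_one] at hxx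
        refine ⟨y * w, ?_⟩
        rw [← hxx, hy]; ring
      · -- 1 + πt^2 = -d^2 is impossible: formally real
        exfalso
        have h3 : ∑ i, (![1, π t, d] i) ^ 2 = 0 := by
          rw [Fin.sum_univ_three]
          show (1:F) ^ 2 + π t ^ 2 + d ^ 2 = 0
          linear_combination hd
        have := hreal 3 ![1, π t, d] h3 0
        exact one_ne_zero this
    · exact key2 t ht hvt
  intro a b
  by_cases hb : b = 0
  · exact ⟨a, by rw [hb]; ring⟩
  obtain ⟨c, hc⟩ := key (a / b)
  refine ⟨b * c, ?_⟩
  have h : b ^ 2 * (1 + (a / b) ^ 2) = (b * c) ^ 2 := by rw [hc]; ring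
  field_simp at h
  linear_combination h
end
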